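/- arXiv:2110.15902 — 7 statements merged into one kernel-verified Lean document; each statement's English description precedes it below -/
import Mathlib

section
/- Let S, P ⊆ 𝒢 be isomorphism-invariant sets with P ⊆ S. If for every G ∈ S there exists H ∈ P such that Ḡ embeds into H̄ (i.e., there is an injective group homomorphism Ḡ → H̄), then P is dense in S, i.e., S is contained in the closure of P in 𝒢. -/
/-- The set of group multiplication tables on `ℕ` with identity `0`. -/
def GroupTables : Set (ℕ × ℕ → ℕ) :=
  {m | (∀ a b c : ℕ, m (m (a, b), c) = m (a, m (b, c))) ∧
       (∀ a : ℕ, m (a, 0) = a) ∧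
       (∀ a : ℕ, m (0, a) = a) ∧
       (∀ a : ℕ, ∃ b : ℕ, m (a, b) = 0 ∧ m (b, a) = 0)}

/-- The carrier of the group `Ḡ` associated to a table `G ∈ 𝒢` (a copy of `ℕ`). -/
def Carrier (_G : ↥GroupTables) : Type := ℕ

noncomputable instance instGroupCarrier (G : ↥GroupTables) : Group (Carrier G) where
  mul a b := G.1 (a, b)
  one := (0 : ℕ)
  inv a := Classical.choose (G.2.2.2.2 a)
  mul_assoc a b c := G.2.1 a b c
  one_mul a := G.2.2.2.1 a
  mul_one a := G.2.2.1 a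
  inv_mul_cancel a := (Classical.choose_spec (G.2.2.2.2 a)).2

/-- Inclusion of `ℕ` into the carrier of `Ḡ`. -/
def toC (G : ↥GroupTables) (n : ℕ) : Carrier G := n

/-- Projection of the carrier of `Ḡ` back to `ℕ`. -/
def fromC (G : ↥GroupTables) (x : Carrier G) : ℕ := x

/-- A set of tables is isomorphism-invariant if membership only depends on the
isomorphism type of the associated group. -/
def IsoInvariant (P : Set ↥GroupTables) : Prop :=
  ∀ G H : ↥GroupTables, Nonempty (Carrier G ≃* Carrier H) → (G ∈ P ↔ H ∈ P)

-- auxiliary: permutation extending an injection on a finite set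
lemma exists_perm_ext (g : ℕ → ℕ) (hg : Function.Injective g) (N : Finset ℕ) :
    ∃ σ : Equiv.Perm ℕ, ∀ n ∈ N, σ n = g n := by
  classical
  set s : Set ℕ := ↑N
  set t : Set ℕ := g '' s
  let e₀ : s ≃ t := Equiv.Set.image g s hg
  have hsf : s.Finite := N.finite_toSet
  have htf : t.Finite := hsf.image g
  have h1 : Infinite ↥(sᶜ) := Set.infinite_coe_iff.2 hsf.infinite_compl
  have h2 : Infinite ↥(tᶜ) := Set.infinite_coe_iff.2 htf.infinite_compl
  obtain ⟨d1⟩ := nonempty_denumerable ↥(sᶜ)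
  obtain ⟨d2⟩ := nonempty_denumerable ↥(tᶜ)
  have e₁ : ↥(sᶜ) ≃ ↥(tᶜ) := (@Denumerable.eqv _ d1).trans (@Denumerable.eqv _ d2).symm
  obtain ⟨σ, hσ⟩ := (Equiv.Set.compl e₀).symm e₁
  exact ⟨σ, fun n hn => (hσ ⟨n, hn⟩).trans rfl⟩


/-- If `S, P ⊆ 𝒢` are isomorphism-invariant, `P ⊆ S`, and every group coded in `S`
embeds into some group coded in `P`, then `P` is dense in `S`. -/
theorem dense_of_embeddable (S P : Set ↥GroupTables)
    (hS : IsoInvariant S) (hP : IsoInvariant P) (hPS : P ⊆ S)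
    (h : ∀ G ∈ S, ∃ H ∈ P, ∃ f : Carrier G →* Carrier H, Function.Injective f) :
    S ⊆ closure P := by
  classical
  intro G hG
  rw [mem_closure_iff_nhds]
  intro w hw
  rw [nhds_subtype, Filter.mem_comap] at hw
  obtain ⟨u, hu, hut⟩ := hw
  rw [nhds_pi, Filter.mem_pi] at hu
  obtain ⟨I, hIfin, tt, htt, hsub⟩ := hu
  obtain ⟨H, hHP, f, hf⟩ := h G hG
  -- the function on ℕ underlying f
  set g : ℕ → ℕ := fun n => fromC H (f (toC G n)) with hg_def
  have hginj : Function.Injective g := fun a b hab => hf hab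
  -- relevant finite set
  set F : Finset (ℕ × ℕ) := hIfin.toFinset
  set N : Finset ℕ :=
    insert 0 (F.image Prod.fst ∪ F.image Prod.snd ∪ F.image G.1) with hN_def
  obtain ⟨σ, hσ⟩ := exists_perm_ext g hginj N
  have hσ0 : σ 0 = 0 := by
    have h0 : (0 : ℕ) ∈ N := Finset.mem_insert_self _ _
    have : g 0 = 0 := congrArg (fromC H) (map_one f)
    rw [hσ 0 h0, this]
  -- the transported table
  set H' : ℕ × ℕ → ℕ := fun p => σ.symm (H.1 (σ p.1, σ p.2)) with hH'_def
  have hH'mem : H' ∈ GroupTables := by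
    refine ⟨fun a b c => ?_, fun a => ?_, fun a => ?_, fun a => ?_⟩
    · simp only [hH'_def, Equiv.apply_symm_apply]
      rw [H.2.1]
    · simp only [hH'_def, hσ0]
      rw [H.2.2.1, Equiv.symm_apply_apply]
    · simp only [hH'_def, hσ0]
      rw [H.2.2.2.1, Equiv.symm_apply_apply]
    · obtain ⟨b, hb1, hb2⟩ := H.2.2.2.2 (σ a)
      refine ⟨σ.symm b, ?_, ?_⟩ <;>
        simp only [hH'_def, Equiv.apply_symm_apply, hb1, hb2] <;>
        first
          | exact hσ0.symm
          | exact (Equiv.symm_apply_eq σ).2 hσ0.symm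
  set H'' : ↥GroupTables := ⟨H', hH'mem⟩
  -- iso from H'' to H via σ
  have iso : Carrier H'' ≃* Carrier H :=
    { toFun := fun a => toC H (σ (fromC H'' a))
      invFun := fun a => toC H'' (σ.symm (fromC H a))
      left_inv := fun a => Equiv.symm_apply_apply σ a
      right_inv := fun a => Equiv.apply_symm_apply σ a
      map_mul' := fun a b => Equiv.apply_symm_apply σ _ }
  have hH''P : H'' ∈ P := (hP H'' H ⟨iso⟩).2 hHP
  refine ⟨H'', hut ?_, hH''P⟩
  show H' ∈ u
  apply hsub
  intro i hi
  have hiF : i ∈ F := hIfin.mem_toFinset.2 hi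
  have h1 : i.1 ∈ N := by
    apply Finset.mem_insert_of_mem
    exact Finset.mem_union_left _ (Finset.mem_union_left _ (Finset.mem_image_of_mem _ hiF))
  have h2 : i.2 ∈ N := by
    apply Finset.mem_insert_of_mem
    exact Finset.mem_union_left _ (Finset.mem_union_right _ (Finset.mem_image_of_mem _ hiF))
  have h3 : G.1 i ∈ N := by
    apply Finset.mem_insert_of_mem
    exact Finset.mem_union_right _ (Finset.mem_image_of_mem _ hiF)
  have key : H' i = G.1 i := by
    have hmul : H.1 (g i.1, g i.2) = g (G.1 i) := by
      have := (map_mul f (toC G i.1) (toC G i.2)).symm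
      exact congrArg (fromC H) this
    calc H' i = σ.symm (H.1 (σ i.1, σ i.2)) := rfl
      _ = σ.symm (H.1 (g i.1, g i.2)) := by rw [hσ _ h1, hσ _ h2]
      _ = σ.symm (g (G.1 i)) := by rw [hmul]
      _ = σ.symm (σ (G.1 i)) := by rw [hσ _ h3]
      _ = G.1 i := Equiv.symm_apply_apply σ _
  rw [key]
  have := htt i
  rw [show (nhds (G.1 i) : Filter ℕ) = pure (G.1 i) from congrFun (nhds_discrete ℕ) _] at this
  exact this
end

section
/- For any nonempty basic clopen sets U, V ⊆ 𝒢 there exists a bijection φ : ℕ → ℕ with φ(0) = 0 such that h_φ(U) ∩ V ≠ ∅. -/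
open Classical in
/-- Any injection defined on a finite subset of a denumerable type extends to a bijection. -/
lemma exists_equiv_extending {α β : Type*} [Denumerable α] [Denumerable β]
    (s : Set α) (hs : s.Finite) (f : α → β) (hf : Set.InjOn f s) :
    ∃ e : α ≃ β, ∀ a ∈ s, e a = f a := by
  have ht : (f '' s).Finite := hs.image f
  have hsc : (sᶜ : Set α).Infinite := hs.infinite_compl
  have htc : ((f '' s)ᶜ : Set β).Infinite := ht.infinite_compl
  haveI : Infinite ↥(sᶜ) := hsc.to_subtype
  haveI : Infinite ↥((f '' s)ᶜ) := htc.to_subtype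
  obtain ⟨d1⟩ := nonempty_denumerable ↥(sᶜ : Set α)
  obtain ⟨d2⟩ := nonempty_denumerable ↥((f '' s)ᶜ : Set β)
  let e1 : s ≃ (f '' s) := Equiv.Set.imageOfInjOn f s hf
  let e2 : ↥(sᶜ : Set α) ≃ ↥((f '' s)ᶜ : Set β) :=
    (@Denumerable.eqv _ d1).trans (@Denumerable.eqv _ d2).symm
  refine ⟨(Equiv.Set.sumCompl s).symm.trans ((e1.sumCongr e2).trans
    (Equiv.Set.sumCompl (f '' s))), fun a ha => ?_⟩
  simp [Equiv.Set.sumCompl_symm_apply_of_mem ha, e1, Equiv.Set.imageOfInjOn]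

/-- Pulling back the product of two group tables along a bijection `ℕ ≃ ℕ × ℕ`
sending `0` to `(0,0)` gives a group table. -/
lemma pullback_mem {G H : ℕ × ℕ → ℕ} (hG : G ∈ GroupTables) (hH : H ∈ GroupTables)
    (e : ℕ ≃ ℕ × ℕ) (he : e 0 = (0, 0)) :
    (fun p : ℕ × ℕ => e.symm (G ((e p.1).1, (e p.2).1), H ((e p.1).2, (e p.2).2)))
      ∈ GroupTables := by
  obtain ⟨Ga, G1, G2, Gi⟩ := hG
  obtain ⟨Ha, H1, H2, Hi⟩ := hH
  refine ⟨?_, ?_, ?_, ?_⟩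
  · intro a b c; simp [Ga, Ha]
  · intro a; simp [he, G1, H1]
  · intro a; simp [he, G2, H2]
  · intro a
    obtain ⟨b1, hb1, hb1'⟩ := Gi (e a).1
    obtain ⟨b2, hb2, hb2'⟩ := Hi (e a).2
    refine ⟨e.symm (b1, b2), ?_, ?_⟩ <;>
      simp [hb1, hb2, hb1', hb2', ← he]

/-- For any nonempty basic clopen sets `U, V ⊆ 𝒢` there is a bijection `φ : ℕ → ℕ`
fixing `0` such that `h_φ(U) ∩ V ≠ ∅`, i.e. some `H ∈ V` is the pushforward along `φ`
of some `G ∈ U`. -/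
theorem basic_clopen_homogeneity (k₁ k₂ : ℕ)
    (m₁ : Fin k₁ × Fin k₁ → ℕ) (m₂ : Fin k₂ × Fin k₂ → ℕ)
    (hU : {G : ↥GroupTables | ∀ i j : Fin k₁, G.1 ((i : ℕ), (j : ℕ)) = m₁ (i, j)}.Nonempty)
    (hV : {G : ↥GroupTables | ∀ i j : Fin k₂, G.1 ((i : ℕ), (j : ℕ)) = m₂ (i, j)}.Nonempty) :
    ∃ φ : ℕ ≃ ℕ, φ 0 = 0 ∧
      ∃ G ∈ {G : ↥GroupTables | ∀ i j : Fin k₁, G.1 ((i : ℕ), (j : ℕ)) = m₁ (i, j)},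
      ∃ H ∈ {G : ↥GroupTables | ∀ i j : Fin k₂, G.1 ((i : ℕ), (j : ℕ)) = m₂ (i, j)},
      ∀ i j : ℕ, H.1 (i, j) = φ (G.1 (φ.symm i, φ.symm j)) := by
  obtain ⟨G, hG⟩ := hU
  obtain ⟨H, hH⟩ := hV
  set N₁ : ℕ := k₁ + Finset.univ.sup m₁ + 1 with hN₁
  set N₂ : ℕ := k₂ + Finset.univ.sup m₂ + 1 with hN₂
  obtain ⟨ψ, hψ⟩ := exists_equiv_extending (Set.Iio N₁) (Set.finite_Iio N₁)
    (fun n => ((n, 0) : ℕ × ℕ)) (fun a _ b _ h => (Prod.mk.injEq _ _ _ _ ▸ h).1)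
  obtain ⟨χ, hχ⟩ := exists_equiv_extending (Set.Iio N₂) (Set.finite_Iio N₂)
    (fun n => ((0, n) : ℕ × ℕ)) (fun a _ b _ h => (Prod.mk.injEq _ _ _ _ ▸ h).2)
  have hψ0 : ψ 0 = (0, 0) := hψ 0 (by simp [hN₁])
  have hχ0 : χ 0 = (0, 0) := hχ 0 (by simp [hN₂])
  set G' : ℕ × ℕ → ℕ :=
    fun p => ψ.symm (G.1 ((ψ p.1).1, (ψ p.2).1), H.1 ((ψ p.1).2, (ψ p.2).2)) with hG'
  set H' : ℕ × ℕ → ℕ :=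
    fun p => χ.symm (G.1 ((χ p.1).1, (χ p.2).1), H.1 ((χ p.1).2, (χ p.2).2)) with hH'
  have hG'mem : G' ∈ GroupTables := pullback_mem G.2 H.2 ψ hψ0
  have hH'mem : H' ∈ GroupTables := pullback_mem G.2 H.2 χ hχ0
  refine ⟨ψ.trans χ.symm, by simp [hψ0, ← hχ0], ⟨G', hG'mem⟩, ?_, ⟨H', hH'mem⟩, ?_, ?_⟩
  · intro i j
    have hi : ψ (i : ℕ) = ((i : ℕ), 0) := hψ i (by simp [hN₁]; omega)
    have hj : ψ (j : ℕ) = ((j : ℕ), 0) := hψ j (by simp [hN₁]; omega)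
    have hm : m₁ (i, j) < N₁ := by
      have := Finset.le_sup (f := m₁) (Finset.mem_univ (i, j)); omega
    have hval : ψ (m₁ (i, j)) = (m₁ (i, j), 0) := hψ _ (by simpa using hm)
    simp only [hG', hi, hj, hG i j, H.2.2.1 0]
    rw [← hval, Equiv.symm_apply_apply]
  · intro i j
    have hi : χ (i : ℕ) = (0, (i : ℕ)) := hχ i (by simp [hN₂]; omega)
    have hj : χ (j : ℕ) = (0, (j : ℕ)) := hχ j (by simp [hN₂]; omega)
    have hm : m₂ (i, j) < N₂ := by
      have := Finset.le_sup (f := m₂) (Finset.mem_univ (i, j)); omega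
    have hval : χ (m₂ (i, j)) = (0, m₂ (i, j)) := hχ _ (by simpa using hm)
    simp only [hH', hi, hj, hH i j, G.2.2.1 0]
    rw [← hval, Equiv.symm_apply_apply]
  · intro i j
    simp [hG', hH']
end

section
/- For every group H, the isomorphism class I_H = {G ∈ 𝒢 : Ḡ ≅ H} is either meager or comeager in 𝒢. -/
set_option linter.unusedSectionVars false
set_option maxHeartbeats 1000000

open Set Topology Filter


section GdeltaPolish

variable {α : Type*} [TopologicalSpace α] [PolishSpace α]

theorem IsGdelta.polishSpace' {s : Set α} (hs : IsGδ s) : PolishSpace s := by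
  obtain ⟨T, hTo, hTc, rfl⟩ := hs
  haveI : Countable ↥T := hTc.to_subtype
  haveI : ∀ t : ↥T, PolishSpace ↥(t.1) := fun t => IsOpen.polishSpace (hTo t.1 t.2)
  set Z := α × (∀ t : ↥T, ↥(t.1))
  let F : ↥(⋂₀ T) → Z := fun x => ⟨x.1, fun t => ⟨x.1, x.2 t.1 t.2⟩⟩
  have hFc : Continuous F := by
    refine continuous_subtype_val.prodMk (continuous_pi fun t => ?_)
    exact Continuous.subtype_mk continuous_subtype_val _
  have hFemb : Topology.IsEmbedding F := by
    have h1 : Topology.IsEmbedding ((fun z : Z => z.1) ∘ F) := by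
      have : (fun z : Z => z.1) ∘ F = Subtype.val := rfl
      rw [this]; exact Topology.IsEmbedding.subtypeVal
    exact Topology.IsEmbedding.of_comp hFc continuous_fst h1
  have hFcl : IsClosed (range F) := by
    have : range F = {z : Z | ∀ t : ↥T, ((z.2 t : α)) = z.1} := by
      ext z
      constructor
      · rintro ⟨x, rfl⟩ t; rfl
      · intro hz
        have hz1 : z.1 ∈ ⋂₀ T := by
          intro t ht
          have := hz ⟨t, ht⟩
          rw [← this]; exact (z.2 ⟨t, ht⟩).2
        refine ⟨⟨z.1, hz1⟩, ?_⟩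
        refine Prod.ext rfl (funext fun t => Subtype.ext ?_)
        exact (hz t).symm
    rw [this, setOf_forall]
    exact isClosed_iInter fun t =>
      isClosed_eq (continuous_subtype_val.comp ((continuous_apply t).comp continuous_snd)) continuous_fst
  exact (Topology.IsClosedEmbedding.mk hFemb hFcl).polishSpace

end GdeltaPolish



section Hull

variable {X : Type*} [TopologicalSpace X] [SecondCountableTopology X]

/-- The open locus where `S` is meager. -/
def mgrLocus (S : Set X) : Set X := ⋃₀ {U | IsOpen U ∧ IsMeagre (U ∩ S)}

lemma isOpen_mgrLocus (S : Set X) : IsOpen (mgrLocus S) :=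
  isOpen_sUnion fun _ h => h.1

lemma isMeagre_mgrLocus_inter (S : Set X) : IsMeagre (mgrLocus S ∩ S) := by
  obtain ⟨T, hTc, hTsub, hTU⟩ :=
    TopologicalSpace.isOpen_sUnion_countable {U : Set X | IsOpen U ∧ IsMeagre (U ∩ S)}
      (fun _ h => h.1)
  have : mgrLocus S ∩ S = ⋃₀ ((fun U => U ∩ S) '' T) := by
    rw [mgrLocus, ← hTU, sUnion_image, sUnion_eq_biUnion]
    ext x; simp only [mem_inter_iff, mem_iUnion, exists_prop]
    tauto
  rw [this, IsMeagre, compl_sUnion]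
  refine (countable_sInter_mem ((hTc.image _).image _)).2 ?_
  rintro W ⟨W', ⟨U, hU, rfl⟩, rfl⟩
  exact (hTsub hU).2

/-- The Baire hull of a set. -/
def bHull (S : Set X) : Set X := (mgrLocus S)ᶜ ∪ (mgrLocus S ∩ S)

lemma subset_bHull (S : Set X) : S ⊆ bHull S := fun x hx => by
  by_cases h : x ∈ mgrLocus S
  · exact Or.inr ⟨h, hx⟩
  · exact Or.inl h

lemma bHull_subset_closure (S : Set X) : bHull S ⊆ closure S := by
  rintro x (hx | hx)
  · by_contra hc
    apply hx
    have hmem : (closure S)ᶜ ∈ {U : Set X | IsOpen U ∧ IsMeagre (U ∩ S)} := by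
      refine ⟨isClosed_closure.isOpen_compl, ?_⟩
      have : (closure S)ᶜ ∩ S = ∅ := by
        apply eq_empty_of_subset_empty
        intro y hy
        exact hy.1 (subset_closure hy.2)
      rw [this]; exact IsMeagre.empty
    exact subset_sUnion_of_mem hmem hc
  · exact subset_closure hx.2

lemma baireMeasurableSet_bHull (S : Set X) : BaireMeasurableSet (bHull S) :=
  ((isOpen_mgrLocus S).baireMeasurableSet.compl).union
    (isMeagre_mgrLocus_inter S).baireMeasurableSet

/-- Key property of the Baire hull: every Baire measurable subset of `bHull S \ S` is meager. -/
lemma isMeagre_of_subset_bHull_diff {S Z : Set X} (hZhull : Z ⊆ bHull S)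
    (hZS : ∀ x ∈ Z, x ∉ S) (hZ : BaireMeasurableSet Z) : IsMeagre Z := by
  obtain ⟨O, hOo, hZO⟩ := hZ.residualEq_isOpen
  have hR : {x : X | x ∈ Z ↔ x ∈ O} ∈ residual X := eventuallyEq_set.1 hZO
  have hRc : IsMeagre {x : X | x ∈ Z ↔ x ∈ O}ᶜ := by
    rw [IsMeagre, compl_compl]; exact hR
  -- O ⊆ mgrLocus S
  have hOm : O ⊆ mgrLocus S := by
    apply subset_sUnion_of_mem
    refine ⟨hOo, ?_⟩
    apply hRc.mono
    intro x hx
    simp only [mem_compl_iff, mem_setOf_eq]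
    intro h
    exact hZS x (h.mpr hx.1) hx.2
  -- Z ∩ O = ∅
  have hZO' : ∀ x ∈ Z, x ∉ O := by
    intro x hxZ hxO
    rcases hZhull hxZ with h | h
    · exact h (hOm hxO)
    · exact hZS x hxZ h.2
  -- hence Z ⊆ complement of the residual agreement set
  apply hRc.mono
  intro x hx
  simp only [mem_compl_iff, mem_setOf_eq]
  intro h
  exact hZO' x hx (h.1 hx)

end Hull

section Analytic

variable {X : Type*} [TopologicalSpace X] [SecondCountableTopology X]
  [T1Space X] [RegularSpace X]

namespace AnalyticBP

variable (f : (ℕ → ℕ) → X)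

/-- Cylinder of a list (read via `PiNat.res`). -/
def cylL (l : List ℕ) : Set (ℕ → ℕ) := {y | PiNat.res y l.length = l}

lemma cylL_nil : cylL ([] : List ℕ) = univ := by
  ext y; simp [cylL]

lemma cylL_cons (n : ℕ) (l : List ℕ) :
    cylL (n :: l) = {y | y l.length = n} ∩ cylL l := by
  ext y
  simp only [cylL, List.length_cons, mem_setOf_eq, PiNat.res_succ, mem_inter_iff]
  constructor
  · intro h; exact ⟨(List.cons.injEq _ _ _ _ ▸ h).1, (List.cons.injEq _ _ _ _ ▸ h).2⟩
  · rintro ⟨h1, h2⟩; rw [h1, h2]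

lemma cylL_eq_iUnion (l : List ℕ) : cylL l = ⋃ n, cylL (n :: l) := by
  ext y
  simp only [mem_iUnion, cylL_cons, mem_inter_iff, mem_setOf_eq]
  constructor
  · intro h; exact ⟨y l.length, rfl, h⟩
  · rintro ⟨n, _, h⟩; exact h

lemma cylL_suffix : ∀ (l t : List ℕ), t <:+ l → cylL l ⊆ cylL t := by
  intro l
  induction l with
  | nil => intro t ht; rw [List.suffix_nil.1 ht]
  | cons n l ih =>
      intro t ht
      rcases List.suffix_cons_iff.1 ht with rfl | ht
      · exact subset_rfl
      · exact (cylL_cons n l ▸ inter_subset_right).trans (ih t ht)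

/-- The Suslin scheme of images of cylinders. -/
def AA (l : List ℕ) : Set X := f '' cylL l

lemma AA_suffix {l t : List ℕ} (h : t <:+ l) : AA f l ⊆ AA f t :=
  image_mono (cylL_suffix l t h)

/-- Regularized (intersected along suffixes) hulls. -/
def BB (l : List ℕ) : Set X := ⋂ t ∈ l.tails, bHull (AA f t)

lemma BB_subset_hull {l t : List ℕ} (h : t <:+ l) : BB f l ⊆ bHull (AA f t) := by
  intro x hx
  exact mem_iInter₂.1 hx t ((List.mem_tails _ _).2 h)

lemma AA_subset_BB (l : List ℕ) : AA f l ⊆ BB f l := by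
  intro x hx
  apply mem_iInter₂.2
  intro t ht
  exact subset_bHull _ (AA_suffix f ((List.mem_tails _ _).1 ht) hx)

lemma baireMeasurableSet_BB (l : List ℕ) : BaireMeasurableSet (BB f l) := by
  apply BaireMeasurableSet.biInter ((l.tails).finite_toSet.countable)
  intro t _
  exact baireMeasurableSet_bHull _

lemma BB_nil : BB f [] = bHull (AA f []) := by
  simp [BB, List.tails]

/-- The meager error sets. -/
def DD (l : List ℕ) : Set X := BB f l \ ⋃ n, BB f (n :: l)

lemma isMeagre_DD (l : List ℕ) : IsMeagre (DD f l) := by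
  apply isMeagre_of_subset_bHull_diff (S := AA f l)
  · exact fun x hx => BB_subset_hull f (List.suffix_rfl) hx.1
  · intro x hx hxA
    apply hx.2
    rw [AA, cylL_eq_iUnion] at hxA
    rw [image_iUnion] at hxA
    obtain ⟨n, hn⟩ := mem_iUnion.1 hxA
    exact mem_iUnion.2 ⟨n, AA_subset_BB f _ hn⟩
  · exact (baireMeasurableSet_BB f l).diff
      (BaireMeasurableSet.iUnion fun n => baireMeasurableSet_BB f _)

theorem baireMeasurableSet_range (hf : Continuous f) : BaireMeasurableSet (range f) := by
  classical
  -- the union of error terms is meager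
  have hM : IsMeagre (⋃ l : List ℕ, DD f l) := by
    have : (⋃ l : List ℕ, DD f l) = ⋃ n : ℕ, DD f ((Denumerable.ofNat (List ℕ) n)) := by
      apply subset_antisymm
      · intro x hx
        obtain ⟨l, hl⟩ := mem_iUnion.1 hx
        exact mem_iUnion.2 ⟨Encodable.encode l, by rwa [Denumerable.ofNat_encode]⟩
      · intro x hx
        obtain ⟨n, hn⟩ := mem_iUnion.1 hx
        exact mem_iUnion.2 ⟨_, hn⟩
    rw [this]
    exact isMeagre_iUnion fun n => isMeagre_DD f _
  -- key inclusion
  have hkey : bHull (AA f []) \ (⋃ l : List ℕ, DD f l) ⊆ range f := by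
    intro x hx
    obtain ⟨hxh, hxD⟩ := hx
    -- step function
    have step : ∀ l : List ℕ, x ∈ BB f l → ∃ n, x ∈ BB f (n :: l) := by
      intro l hl
      have : x ∉ DD f l := fun h => hxD (mem_iUnion.2 ⟨l, h⟩)
      rw [DD] at this
      simp only [mem_diff, mem_iUnion, not_and, not_not, not_forall, not_exists] at this
      rcases Classical.em (∃ n, x ∈ BB f (n :: l)) with h | h
      · exact h
      · exact absurd hl (by
          intro hl'
          rcases this hl' with ⟨n, hn⟩
          exact h ⟨n, hn⟩)
    choose nxt hnxt using step
    have h0 : x ∈ BB f [] := by rw [BB_nil]; exact hxh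
    let g : ℕ → {l : List ℕ // x ∈ BB f l} := fun k =>
      Nat.rec ⟨[], h0⟩ (fun _ p => ⟨nxt p.1 p.2 :: p.1, hnxt p.1 p.2⟩) k
    let y : ℕ → ℕ := fun k => nxt (g k).1 (g k).2
    have hglen : ∀ k, PiNat.res y k = (g k).1 := by
      intro k
      induction k with
      | zero => rfl
      | succ k ih =>
          have : g (k + 1) = ⟨nxt (g k).1 (g k).2 :: (g k).1, hnxt (g k).1 (g k).2⟩ := rfl
          rw [PiNat.res_succ, this, ih]
    -- x is in the closure of f '' cylinder y k for every k
    have hcl : ∀ k : ℕ, x ∈ closure (f '' PiNat.cylinder y k) := by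
      intro k
      have h1 : x ∈ bHull (AA f (g k).1) := BB_subset_hull f List.suffix_rfl (g k).2
      have h2 : x ∈ closure (AA f (g k).1) := bHull_subset_closure _ h1
      have h3 : cylL ((g k).1 : List ℕ) = PiNat.cylinder y k := by
        rw [PiNat.cylinder_eq_res, ← hglen k]
        ext z
        simp only [cylL, mem_setOf_eq, ← hglen k, PiNat.res_length]
      rwa [AA, h3] at h2
    -- conclude x = f y
    refine ⟨y, ?_⟩
    by_contra hne
    have hxne : f y ≠ x := hne
    have hnhd : ({x} : Set X)ᶜ ∈ 𝓝 (f y) :=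
      (isOpen_compl_singleton).mem_nhds (by simpa using hxne)
    obtain ⟨t, htn, htc, hts⟩ := exists_mem_nhds_isClosed_subset hnhd
    have hpre : f ⁻¹' t ∈ 𝓝 y := hf.continuousAt.preimage_mem_nhds htn
    obtain ⟨U, hUsub, hUo, hyU⟩ := mem_nhds_iff.1 hpre
    obtain ⟨v, ⟨z, n, rfl⟩, hyv, hvU⟩ :=
      (PiNat.isTopologicalBasis_cylinders (fun _ : ℕ => ℕ)).exists_subset_of_mem_open hyU hUo
    have hcyl : PiNat.cylinder y n ⊆ f ⁻¹' t := by
      rw [PiNat.mem_cylinder_iff_eq.1 hyv]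
      exact hvU.trans hUsub
    have : x ∈ t := by
      have := hcl n
      have himg : f '' PiNat.cylinder y n ⊆ t := by
        rintro w ⟨u, hu, rfl⟩; exact hcyl hu
      have := closure_mono himg this
      rwa [htc.closure_eq] at this
    exact hts this rfl
  -- assemble
  have hsub : range f ⊆ bHull (AA f []) := by
    have : range f = AA f [] := by rw [AA, cylL_nil, image_univ]
    rw [this]; exact subset_bHull _
  have hdecomp : range f =
      (bHull (AA f []) \ (⋃ l : List ℕ, DD f l)) ∪ (range f ∩ ⋃ l : List ℕ, DD f l) := by
    apply subset_antisymm
    · intro x hx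
      by_cases h : x ∈ ⋃ l : List ℕ, DD f l
      · exact Or.inr ⟨hx, h⟩
      · exact Or.inl ⟨hsub hx, h⟩
    · rintro x (hx | hx)
      · exact hkey hx
      · exact hx.1
  rw [hdecomp]
  exact ((baireMeasurableSet_bHull _).diff hM.baireMeasurableSet).union
    (hM.mono inter_subset_right).baireMeasurableSet

end AnalyticBP

/-- Ranges of continuous maps from Polish spaces (analytic sets) are Baire measurable. -/
theorem baireMeasurableSet_range_of_polish {Y : Type*} [TopologicalSpace Y] [PolishSpace Y]
    {f : Y → X} (hf : Continuous f) : BaireMeasurableSet (range f) := by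
  rcases isEmpty_or_nonempty Y with h | h
  · have : range f = ∅ := range_eq_empty f
    rw [this]
    exact IsMeagre.empty.baireMeasurableSet
  · obtain ⟨g, hgc, hgs⟩ := PolishSpace.exists_nat_nat_continuous_surjective Y
    have : range (f ∘ g) = range f := by
      rw [range_comp, hgs.range_eq, image_univ]
    rw [← this]
    exact AnalyticBP.baireMeasurableSet_range (f ∘ g) (hf.comp hgc)

end Analytic



section Topol

variable {Z : Type*} [TopologicalSpace Z]

lemma continuous_eval_table {ι : Type*} [TopologicalSpace ι] [DiscreteTopology ι]
    {w : Z → ι → ℕ} {g : Z → ι}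
    (hw : Continuous w) (hg : Continuous g) : Continuous fun z => w z (g z) := by
  rw [continuous_discrete_rng]
  intro n
  have : (fun z => w z (g z)) ⁻¹' {n} =
      ⋃ p : ι, (g ⁻¹' {p}) ∩ ((fun z => w z p) ⁻¹' {n}) := by
    ext z
    simp only [mem_preimage, mem_singleton_iff, mem_iUnion, mem_inter_iff]
    constructor
    · intro h; exact ⟨g z, rfl, h⟩
    · rintro ⟨p, rfl, h⟩; exact h
  rw [this]
  exact isOpen_iUnion fun p =>
    (hg.isOpen_preimage _ (isOpen_discrete _)).inter
      (((continuous_apply p).comp hw).isOpen_preimage _ (isOpen_discrete _))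

lemma isOpen_eq_discrete {F G : Z → ℕ} (hF : Continuous F) (hG : Continuous G) :
    IsOpen {z | F z = G z} := by
  have : {z | F z = G z} = ⋃ n : ℕ, (F ⁻¹' {n}) ∩ (G ⁻¹' {n}) := by
    ext z
    simp only [mem_setOf_eq, mem_iUnion, mem_inter_iff, mem_preimage, mem_singleton_iff]
    constructor
    · intro h; exact ⟨G z, h, rfl⟩
    · rintro ⟨n, h1, h2⟩; rw [h1, h2]
  rw [this]
  exact isOpen_iUnion fun n =>
    (hF.isOpen_preimage _ (isOpen_discrete _)).inter (hG.isOpen_preimage _ (isOpen_discrete _))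

end Topol




section TableOf

variable {K : Type*} [Group K]

/-- The multiplication table obtained by pulling back a group structure along a bijection. -/
def tableOf (e : ℕ ≃ K) : ℕ × ℕ → ℕ := fun p => e.symm (e p.1 * e p.2)

lemma tableOf_mem (e : ℕ ≃ K) (he : e 0 = 1) : tableOf e ∈ GroupTables := by
  refine ⟨?_, ?_, ?_, ?_⟩
  · intro a b c
    simp [tableOf, mul_assoc]
  · intro a
    simp [tableOf, he]
  · intro a
    simp [tableOf, he]
  · intro a
    refine ⟨e.symm (e a)⁻¹, ?_, ?_⟩ <;> simp [tableOf, ← he]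

/-- The group on `ℕ` given by a pullback table is isomorphic to the original group. -/
noncomputable def tableOfEquiv (e : ℕ ≃ K) (he : e 0 = 1) :
    Carrier ⟨tableOf e, tableOf_mem e he⟩ ≃* K where
  toFun x := e (fromC _ x)
  invFun k := toC _ (e.symm k)
  left_inv x := by simp [toC, fromC]; exact e.symm_apply_apply (x : ℕ)
  right_inv k := by simp [toC, fromC]
  map_mul' x y := by
    show e (tableOf e (fromC _ x, fromC _ y)) = _
    simp [tableOf]

/-- Transport isomorphisms along equalities of tables. -/
noncomputable def carrierCongr {G₁ G₂ : ↥GroupTables} (h : G₁ = G₂) : Carrier G₁ ≃* Carrier G₂ :=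
  h ▸ MulEquiv.refl (Carrier G₁)

end TableOf

section Act

/-- A permutation of `ℕ`, viewed as a bijection onto the carrier of a table group. -/
def permToCarrier (G : ↥GroupTables) (σ : Equiv.Perm ℕ) : ℕ ≃ Carrier G where
  toFun n := toC G (σ n)
  invFun x := σ.symm (fromC G x)
  left_inv n := by simp [toC, fromC]
  right_inv x := by simp [toC, fromC]; exact σ.apply_symm_apply (x : ℕ)

lemma symm_zero {σ : Equiv.Perm ℕ} (hσ : σ 0 = 0) : σ.symm 0 = 0 := by
  rw [Equiv.symm_apply_eq]; exact hσ.symm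

lemma permToCarrier_one {G : ↥GroupTables} {σ : Equiv.Perm ℕ} (hσ : σ 0 = 0) :
    permToCarrier G σ.symm 0 = 1 := by
  show toC G (σ.symm 0) = 1
  rw [symm_zero hσ]
  rfl

/-- Action of a permutation of `ℕ` on multiplication tables. -/
def actTable (σ : Equiv.Perm ℕ) (m : ℕ × ℕ → ℕ) : ℕ × ℕ → ℕ :=
  fun p => σ (m (σ.symm p.1, σ.symm p.2))

lemma actTable_eq_tableOf (σ : Equiv.Perm ℕ) (G : ↥GroupTables) :
    actTable σ G.1 = tableOf (permToCarrier G σ.symm) := rfl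

lemma actTable_mem (σ : Equiv.Perm ℕ) (hσ : σ 0 = 0) (G : ↥GroupTables) :
    actTable σ G.1 ∈ GroupTables := by
  rw [actTable_eq_tableOf]
  exact tableOf_mem _ (permToCarrier_one hσ)

lemma actTable_actTable (σ : Equiv.Perm ℕ) (m : ℕ × ℕ → ℕ) :
    actTable σ.symm (actTable σ m) = m := by
  funext p
  simp [actTable]

/-- The homeomorphism of the space of group tables induced by a permutation fixing `0`. -/
def actHomeo (σ : Equiv.Perm ℕ) (hσ : σ 0 = 0) : ↥GroupTables ≃ₜ ↥GroupTables where
  toFun G := ⟨actTable σ G.1, actTable_mem σ hσ G⟩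
  invFun G := ⟨actTable σ.symm G.1, actTable_mem σ.symm (symm_zero hσ) G⟩
  left_inv G := Subtype.ext (actTable_actTable σ G.1)
  right_inv G := Subtype.ext (by
    have := actTable_actTable σ.symm G.1
    rwa [Equiv.symm_symm] at this)
  continuous_toFun := by
    apply Continuous.subtype_mk
    apply continuous_pi
    intro p
    exact continuous_of_discreteTopology.comp
      ((continuous_apply (σ.symm p.1, σ.symm p.2)).comp continuous_subtype_val)
  continuous_invFun := by
    apply Continuous.subtype_mk
    apply continuous_pi
    intro p
    exact continuous_of_discreteTopology.comp
      ((continuous_apply (σ.symm.symm p.1, σ.symm.symm p.2)).comp continuous_subtype_val)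

/-- The group on the permuted table is isomorphic to the original group. -/
noncomputable def actMulEquiv (σ : Equiv.Perm ℕ) (hσ : σ 0 = 0) (G : ↥GroupTables) :
    Carrier (actHomeo σ hσ G) ≃* Carrier G := by
  have h : actHomeo σ hσ G = ⟨tableOf (permToCarrier G σ.symm),
      tableOf_mem _ (permToCarrier_one hσ)⟩ :=
    Subtype.ext (actTable_eq_tableOf σ G)
  exact (carrierCongr h).trans (tableOfEquiv _ (permToCarrier_one hσ))

end Act

section PermOf

/-- Builds a permutation of `ℕ` with finitely many prescribed values. -/
noncomputable def permOf (w : ℕ → ℕ) : ℕ → Equiv.Perm ℕ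
  | 0 => 1
  | (k + 1) => (permOf w k).trans (Equiv.swap ((permOf w k) k) (w k))

lemma permOf_spec {w : ℕ → ℕ} {K : ℕ} (hw : ∀ i j, i < K → j < K → w i = w j → i = j) :
    ∀ k, k ≤ K → ∀ j, j < k → permOf w k j = w j := by
  intro k
  induction k with
  | zero => intro _ j hj; omega
  | succ k ih =>
      intro hk j hj
      have hkK : k ≤ K := le_of_lt (Nat.lt_of_lt_of_le (Nat.lt_succ_self k) hk)
      show Equiv.swap ((permOf w k) k) (w k) ((permOf w k) j) = w j
      rcases Nat.lt_or_ge j k with h | h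
      · rw [ih hkK j h]
        apply Equiv.swap_apply_of_ne_of_ne
        · rw [← ih hkK j h]
          exact fun hc => (Nat.ne_of_lt h) ((permOf w k).injective (by rw [ih hkK j h] at hc ⊢; exact hc))
        · intro hc
          exact (Nat.ne_of_lt h) (hw j k (lt_of_lt_of_le hj hk) (Nat.lt_of_lt_of_le (Nat.lt_succ_self k) hk) hc)
      · have : j = k := by omega
        subst this
        rw [Equiv.swap_apply_left]

end PermOf

section Basic

/-- Every open neighborhood in the space of tables contains a basic neighborhood determined
by finitely many coordinates. -/
lemma exists_finset_basic {U : Set ↥GroupTables} (hU : IsOpen U) {G : ↥GroupTables} (hG : G ∈ U) :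
    ∃ t : Finset (ℕ × ℕ), ∀ G' : ↥GroupTables, (∀ p ∈ t, G'.1 p = G.1 p) → G' ∈ U := by
  obtain ⟨W, hWo, hWU⟩ := isOpen_induced_iff.1 hU
  have hGW : G.1 ∈ W := by rw [← hWU] at hG; exact hG
  obtain ⟨I, u, hu, hIW⟩ := isOpen_pi_iff.1 hWo G.1 hGW
  refine ⟨I, fun G' hG' => ?_⟩
  have : G'.1 ∈ W := by
    apply hIW
    intro p hp
    rw [hG' p hp]
    exact (hu p hp).2
  rw [← hWU]
  exact this

end Basic

section Trans

@[simp] lemma toC_mul (G : ↥GroupTables) (a b : ℕ) :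
    toC G a * toC G b = toC G (G.1 (a, b)) := rfl

@[simp] lemma fromC_toC (G : ↥GroupTables) (n : ℕ) : fromC G (toC G n) = n := rfl

/-- A bijection `ℕ ≃ ℕ × ℕ` viewed as a bijection onto a product of two table groups. -/
def prodToCarrier (G₀ G₁ : ↥GroupTables) (β : ℕ ≃ ℕ × ℕ) : ℕ ≃ Carrier G₀ × Carrier G₁ where
  toFun n := (toC G₀ (β n).1, toC G₁ (β n).2)
  invFun p := β.symm (fromC G₀ p.1, fromC G₁ p.2)
  left_inv n := by simp [toC, fromC]
  right_inv p := by simp [toC, fromC]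

lemma prodToCarrier_one {G₀ G₁ : ↥GroupTables} {β : ℕ ≃ ℕ × ℕ} (hβ : β 0 = (0, 0)) :
    prodToCarrier G₀ G₁ β 0 = 1 := by
  show (toC G₀ (β 0).1, toC G₁ (β 0).2) = 1
  rw [hβ]
  rfl

lemma tableOf_prod_fst {G₀ G₁ : ↥GroupTables} {β : ℕ ≃ ℕ × ℕ} {a b : ℕ}
    (ha : β a = (a, 0)) (hb : β b = (b, 0)) (hc : β (G₀.1 (a, b)) = (G₀.1 (a, b), 0)) :
    tableOf (prodToCarrier G₀ G₁ β) (a, b) = G₀.1 (a, b) := by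
  show β.symm (fromC G₀ ((prodToCarrier G₀ G₁ β a).1 * (prodToCarrier G₀ G₁ β b).1),
      fromC G₁ ((prodToCarrier G₀ G₁ β a).2 * (prodToCarrier G₀ G₁ β b).2)) = _
  show β.symm (fromC G₀ (toC G₀ (β a).1 * toC G₀ (β b).1),
      fromC G₁ (toC G₁ (β a).2 * toC G₁ (β b).2)) = _
  rw [ha, hb]
  simp only [toC_mul, fromC_toC]
  have h0 : G₁.1 (0, 0) = 0 := G₁.2.2.1 0
  rw [h0, ← hc, Equiv.symm_apply_apply]

lemma tableOf_prod_snd {G₀ G₁ : ↥GroupTables} {γ : ℕ ≃ ℕ × ℕ} {a b : ℕ}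
    (ha : γ a = (0, a)) (hb : γ b = (0, b)) (hc : γ (G₁.1 (a, b)) = (0, G₁.1 (a, b))) :
    tableOf (prodToCarrier G₀ G₁ γ) (a, b) = G₁.1 (a, b) := by
  show γ.symm (fromC G₀ (toC G₀ (γ a).1 * toC G₀ (γ b).1),
      fromC G₁ (toC G₁ (γ a).2 * toC G₁ (γ b).2)) = _
  rw [ha, hb]
  simp only [toC_mul, fromC_toC]
  have h0 : G₀.1 (0, 0) = 0 := G₀.2.2.1 0
  rw [h0, ← hc, Equiv.symm_apply_apply]

lemma actTable_tableOf_prod (G₀ G₁ : ↥GroupTables) (β γ : ℕ ≃ ℕ × ℕ) :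
    actTable (β.trans γ.symm) (tableOf (prodToCarrier G₀ G₁ β)) =
      tableOf (prodToCarrier G₀ G₁ γ) := by
  funext p
  show (β.trans γ.symm) (tableOf (prodToCarrier G₀ G₁ β)
    ((β.trans γ.symm).symm p.1, (β.trans γ.symm).symm p.2)) = _
  show γ.symm (β ((prodToCarrier G₀ G₁ β).symm
      (prodToCarrier G₀ G₁ β (β.symm (γ p.1)) * prodToCarrier G₀ G₁ β (β.symm (γ p.2))))) = _
  show γ.symm (β (β.symm (fromC G₀ (toC G₀ (β (β.symm (γ p.1))).1 * toC G₀ (β (β.symm (γ p.2))).1),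
      fromC G₁ (toC G₁ (β (β.symm (γ p.1))).2 * toC G₁ (β (β.symm (γ p.2))).2)))) = _
  simp only [Equiv.apply_symm_apply, toC_mul, fromC_toC]
  rfl

/-- Topological transitivity of the permutation action on the space of group tables. -/
lemma exists_perm_image_mem {U V : Set ↥GroupTables} (hU : IsOpen U) (hV : IsOpen V)
    (hUne : U.Nonempty) (hVne : V.Nonempty) :
    ∃ (σ : Equiv.Perm ℕ) (hσ : σ 0 = 0) (G : ↥GroupTables),
      G ∈ U ∧ actHomeo σ hσ G ∈ V := by
  obtain ⟨G₀, hG₀⟩ := hUne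
  obtain ⟨G₁, hG₁⟩ := hVne
  obtain ⟨t₀, ht₀⟩ := exists_finset_basic hU hG₀
  obtain ⟨t₁, ht₁⟩ := exists_finset_basic hV hG₁
  set K : ℕ := (t₀ ∪ t₁).sup
    (fun p => max (max p.1 p.2) (max (G₀.1 p) (G₁.1 p))) + 1 with hK
  have hKpos : 0 < K := Nat.succ_pos _
  set E : ℕ ≃ ℕ × ℕ := (Denumerable.eqv (ℕ × ℕ)).symm with hE
  -- build β with β i = (i, 0) for i < K
  have hw₀ : ∀ i j, i < K → j < K → E.symm (i, 0) = E.symm (j, 0) → i = j := by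
    intro i j _ _ h
    have := E.symm.injective h
    exact (Prod.mk.injEq _ _ _ _ ▸ this).1
  set β : ℕ ≃ ℕ × ℕ := (permOf (fun i => E.symm (i, 0)) K).trans E with hβdef
  have hβ : ∀ i, i < K → β i = (i, 0) := by
    intro i hi
    show E (permOf (fun i => E.symm (i, 0)) K i) = (i, 0)
    rw [permOf_spec hw₀ K le_rfl i hi, Equiv.apply_symm_apply]
  have hw₁ : ∀ i j, i < K → j < K → E.symm (0, i) = E.symm (0, j) → i = j := by
    intro i j _ _ h
    have := E.symm.injective h
    exact (Prod.mk.injEq _ _ _ _ ▸ this).2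
  set γ : ℕ ≃ ℕ × ℕ := (permOf (fun i => E.symm (0, i)) K).trans E with hγdef
  have hγ : ∀ i, i < K → γ i = (0, i) := by
    intro i hi
    show E (permOf (fun i => E.symm (0, i)) K i) = (0, i)
    rw [permOf_spec hw₁ K le_rfl i hi, Equiv.apply_symm_apply]
  have hβ0 : β 0 = (0, 0) := hβ 0 hKpos
  have hγ0 : γ 0 = (0, 0) := hγ 0 hKpos
  -- the two pullback tables
  set G₂ : ↥GroupTables := ⟨tableOf (prodToCarrier G₀ G₁ β),
    tableOf_mem _ (prodToCarrier_one hβ0)⟩ with hG₂def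
  set G₃ : ↥GroupTables := ⟨tableOf (prodToCarrier G₀ G₁ γ),
    tableOf_mem _ (prodToCarrier_one hγ0)⟩ with hG₃def
  set σ : Equiv.Perm ℕ := β.trans γ.symm with hσdef
  have hσ : σ 0 = 0 := by
    show γ.symm (β 0) = 0
    rw [hβ0, ← hγ0, Equiv.symm_apply_apply]
  have bound : ∀ p ∈ t₀ ∪ t₁, p.1 < K ∧ p.2 < K ∧ G₀.1 p < K ∧ G₁.1 p < K := by
    intro p hp
    have hle := Finset.le_sup
      (f := fun p : ℕ × ℕ => max (max p.1 p.2) (max (G₀.1 p) (G₁.1 p))) hp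
    have hb : max (max p.1 p.2) (max (G₀.1 p) (G₁.1 p)) < K := Nat.lt_succ_of_le hle
    refine ⟨?_, ?_, ?_, ?_⟩
    · exact lt_of_le_of_lt ((le_max_left _ _).trans (le_max_left _ _)) hb
    · exact lt_of_le_of_lt ((le_max_right _ _).trans (le_max_left _ _)) hb
    · exact lt_of_le_of_lt ((le_max_left _ _).trans (le_max_right _ _)) hb
    · exact lt_of_le_of_lt ((le_max_right _ _).trans (le_max_right _ _)) hb
  refine ⟨σ, hσ, G₂, ?_, ?_⟩
  · -- G₂ ∈ U
    apply ht₀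
    rintro ⟨a, b⟩ hp
    obtain ⟨h1, h2, h3, -⟩ := bound _ (Finset.mem_union_left _ hp)
    exact tableOf_prod_fst (hβ a h1) (hβ b h2) (hβ _ h3)
  · -- actHomeo σ hσ G₂ = G₃ ∈ V
    have hact : actHomeo σ hσ G₂ = G₃ :=
      Subtype.ext (actTable_tableOf_prod G₀ G₁ β γ)
    rw [hact]
    apply ht₁
    rintro ⟨a, b⟩ hp
    obtain ⟨h1, h2, -, h4⟩ := bound _ (Finset.mem_union_right _ hp)
    exact tableOf_prod_snd (hγ a h1) (hγ b h2) (hγ _ h4)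

end Trans

lemma isGdelta_groupTables : IsGδ GroupTables := by
  have h1 : IsGδ {m : ℕ × ℕ → ℕ | ∀ a b c : ℕ, m (m (a, b), c) = m (a, m (b, c))} := by
    have : {m : ℕ × ℕ → ℕ | ∀ a b c : ℕ, m (m (a, b), c) = m (a, m (b, c))} =
        ⋂ p : ℕ × ℕ × ℕ, {m | m (m (p.1, p.2.1), p.2.2) = m (p.1, m (p.2.1, p.2.2))} := by
      ext m; simp only [mem_setOf_eq, mem_iInter]
      exact ⟨fun h p => h p.1 p.2.1 p.2.2, fun h a b c => h (a, b, c)⟩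
    rw [this]
    refine IsGδ.iInter fun p => IsOpen.isGδ ?_
    exact isOpen_eq_discrete
      (continuous_eval_table continuous_id
        ((continuous_eval_table continuous_id continuous_const).prodMk continuous_const))
      (continuous_eval_table continuous_id
        (continuous_const.prodMk (continuous_eval_table continuous_id continuous_const)))
  have h2 : IsGδ {m : ℕ × ℕ → ℕ | ∀ a : ℕ, m (a, 0) = a} := by
    have : {m : ℕ × ℕ → ℕ | ∀ a : ℕ, m (a, 0) = a} = ⋂ a : ℕ, {m | m (a, 0) = a} := by
      ext m; simp
    rw [this]
    exact IsGδ.iInter fun a => IsOpen.isGδ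
      (isOpen_eq_discrete (continuous_apply _) continuous_const)
  have h3 : IsGδ {m : ℕ × ℕ → ℕ | ∀ a : ℕ, m (0, a) = a} := by
    have : {m : ℕ × ℕ → ℕ | ∀ a : ℕ, m (0, a) = a} = ⋂ a : ℕ, {m | m (0, a) = a} := by
      ext m; simp
    rw [this]
    exact IsGδ.iInter fun a => IsOpen.isGδ
      (isOpen_eq_discrete (continuous_apply _) continuous_const)
  have h4 : IsGδ {m : ℕ × ℕ → ℕ | ∀ a : ℕ, ∃ b : ℕ, m (a, b) = 0 ∧ m (b, a) = 0} := by
    have : {m : ℕ × ℕ → ℕ | ∀ a : ℕ, ∃ b : ℕ, m (a, b) = 0 ∧ m (b, a) = 0} =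
        ⋂ a : ℕ, ⋃ b : ℕ, {m | m (a, b) = 0} ∩ {m | m (b, a) = 0} := by
      ext m
      simp only [mem_setOf_eq, mem_iInter, mem_iUnion, mem_inter_iff]
    rw [this]
    refine IsGδ.iInter fun a => IsOpen.isGδ (isOpen_iUnion fun b => IsOpen.inter ?_ ?_)
    · exact isOpen_eq_discrete (continuous_apply _) continuous_const
    · exact isOpen_eq_discrete (continuous_apply _) continuous_const
  have : GroupTables = _ ∩ (_ ∩ (_ ∩ _)) := rfl
  exact h1.inter (h2.inter (h3.inter h4))


section Instances

instance : PolishSpace ↥GroupTables := IsGdelta.polishSpace' isGdelta_groupTables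

instance : BaireSpace ↥GroupTables := by
  letI i := TopologicalSpace.upgradeIsCompletelyMetrizable ↥GroupTables
  have c : @CompleteSpace ↥GroupTables i.toMetricSpace.toUniformSpace := i.toCompleteSpace
  exact BaireSpace.of_completelyPseudoMetrizable

end Instances

section IsoClass

variable {H : Type*} [Group H]

/-- The group isomorphism `Carrier G ≃* H` built from an equivariant bijection `ℕ → ℕ`. -/
noncomputable def mulEquivOfTable (eH : ℕ ≃ H) (G : ↥GroupTables) (f : ℕ → ℕ)
    (hbij : Function.Bijective f)
    (hmul : ∀ a b : ℕ, f (G.1 (a, b)) = eH.symm (eH (f a) * eH (f b))) :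
    Carrier G ≃* H where
  toFun x := eH (f (fromC G x))
  invFun h := toC G ((Equiv.ofBijective f hbij).symm (eH.symm h))
  left_inv x := by
    show toC G ((Equiv.ofBijective f hbij).symm (eH.symm (eH (f (fromC G x))))) = x
    rw [Equiv.symm_apply_apply, Equiv.ofBijective_symm_apply_apply]
    rfl
  right_inv h := by
    show eH (f ((Equiv.ofBijective f hbij).symm (eH.symm h))) = h
    have : f ((Equiv.ofBijective f hbij).symm (eH.symm h)) = eH.symm h := by
      have := (Equiv.ofBijective f hbij).apply_symm_apply (eH.symm h)
      exact this
    rw [this, Equiv.apply_symm_apply]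
  map_mul' x y := by
    show eH (f (G.1 (fromC G x, fromC G y))) = _
    rw [hmul, Equiv.apply_symm_apply]

/-- Membership in the isomorphism class, in terms of tables. -/
lemma mem_isoClass_iff (eH : ℕ ≃ H) (G : ↥GroupTables) :
    Nonempty (Carrier G ≃* H) ↔
      ∃ f : ℕ → ℕ, Function.Bijective f ∧
        ∀ a b : ℕ, f (G.1 (a, b)) = eH.symm (eH (f a) * eH (f b)) := by
  constructor
  · rintro ⟨φ⟩
    refine ⟨fun n => eH.symm (φ (toC G n)), ?_, ?_⟩
    · have h1 : Function.Bijective (toC G) := ⟨fun a b h => h, fun b => ⟨b, rfl⟩⟩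
      exact (eH.symm.bijective.comp φ.bijective).comp h1
    · intro a b
      show eH.symm (φ (toC G (G.1 (a, b)))) =
        eH.symm (eH (eH.symm (φ (toC G a))) * eH (eH.symm (φ (toC G b))))
      have h2 : toC G (G.1 (a, b)) = toC G a * toC G b := rfl
      rw [h2, map_mul, Equiv.apply_symm_apply, Equiv.apply_symm_apply]
  · rintro ⟨f, hbij, hmul⟩
    exact ⟨mulEquivOfTable eH G f hbij hmul⟩

/-- The set of pairs `(G, f)` where `f` is an isomorphism witness. -/
def WitnessSet (eH : ℕ ≃ H) : Set (↥GroupTables × (ℕ → ℕ)) :=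
  {q | Function.Bijective q.2 ∧
    ∀ a b : ℕ, q.2 (q.1.1 (a, b)) = eH.symm (eH (q.2 a) * eH (q.2 b))}

lemma isGdelta_witnessSet (eH : ℕ ≃ H) : IsGδ (WitnessSet eH) := by
  have hsurj : IsGδ {q : ↥GroupTables × (ℕ → ℕ) | Function.Surjective q.2} := by
    have : {q : ↥GroupTables × (ℕ → ℕ) | Function.Surjective q.2} =
        ⋂ n : ℕ, ⋃ m : ℕ, {q : ↥GroupTables × (ℕ → ℕ) | q.2 m = n} := by
      ext q
      simp only [mem_setOf_eq, mem_iInter, mem_iUnion, Function.Surjective]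
    rw [this]
    refine IsGδ.iInter fun n => IsOpen.isGδ (isOpen_iUnion fun m => ?_)
    exact isOpen_eq_discrete ((continuous_apply m).comp continuous_snd) continuous_const
  have hinj : IsGδ {q : ↥GroupTables × (ℕ → ℕ) | Function.Injective q.2} := by
    have : {q : ↥GroupTables × (ℕ → ℕ) | Function.Injective q.2} =
        ⋂ p : ℕ × ℕ, {q : ↥GroupTables × (ℕ → ℕ) | q.2 p.1 = q.2 p.2 → p.1 = p.2} := by
      ext q
      simp only [mem_setOf_eq, mem_iInter, Function.Injective]
      exact ⟨fun h p hp => h hp, fun h a b hab => h (a, b) hab⟩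
    rw [this]
    refine IsGδ.iInter fun p => IsOpen.isGδ ?_
    rcases eq_or_ne p.1 p.2 with h | h
    · have : {q : ↥GroupTables × (ℕ → ℕ) | q.2 p.1 = q.2 p.2 → p.1 = p.2} = univ := by
        ext q; simp [h]
      rw [this]; exact isOpen_univ
    · have : {q : ↥GroupTables × (ℕ → ℕ) | q.2 p.1 = q.2 p.2 → p.1 = p.2} =
          ⋃ n : ℕ, ⋃ m : ℕ, ⋃ _ : n ≠ m,
            ({q : ↥GroupTables × (ℕ → ℕ) | q.2 p.1 = n} ∩ {q | q.2 p.2 = m}) := by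
        ext q
        simp only [mem_setOf_eq, mem_iUnion, mem_inter_iff]
        constructor
        · intro hq
          refine ⟨q.2 p.1, q.2 p.2, fun hc => h (hq hc), rfl, rfl⟩
        · rintro ⟨n, m, hnm, h1, h2⟩ hc
          exact absurd (h1 ▸ h2 ▸ hc) hnm
      rw [this]
      refine isOpen_iUnion fun n => isOpen_iUnion fun m => isOpen_iUnion fun _ => ?_
      exact (isOpen_eq_discrete ((continuous_apply p.1).comp continuous_snd)
          continuous_const).inter
        (isOpen_eq_discrete ((continuous_apply p.2).comp continuous_snd) continuous_const)
  have hmul : IsGδ {q : ↥GroupTables × (ℕ → ℕ) |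
      ∀ a b : ℕ, q.2 (q.1.1 (a, b)) = eH.symm (eH (q.2 a) * eH (q.2 b))} := by
    have : {q : ↥GroupTables × (ℕ → ℕ) |
        ∀ a b : ℕ, q.2 (q.1.1 (a, b)) = eH.symm (eH (q.2 a) * eH (q.2 b))} =
        ⋂ p : ℕ × ℕ, {q : ↥GroupTables × (ℕ → ℕ) |
          q.2 (q.1.1 (p.1, p.2)) = eH.symm (eH (q.2 p.1) * eH (q.2 p.2))} := by
      ext q
      simp only [mem_setOf_eq, mem_iInter, Prod.forall]
    rw [this]
    refine IsGδ.iInter fun p => IsOpen.isGδ (isOpen_eq_discrete ?_ ?_)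
    · have hg : Continuous fun q : ↥GroupTables × (ℕ → ℕ) => q.1.1 (p.1, p.2) :=
        (continuous_apply (p.1, p.2)).comp (continuous_subtype_val.comp continuous_fst)
      have hw : Continuous fun q : ↥GroupTables × (ℕ → ℕ) => q.2 := continuous_snd
      exact continuous_eval_table hw hg
    · have hpair : Continuous fun q : ↥GroupTables × (ℕ → ℕ) => (q.2 p.1, q.2 p.2) :=
        Continuous.prodMk ((continuous_apply p.1).comp continuous_snd)
          ((continuous_apply p.2).comp continuous_snd)
      have hF : Continuous (fun r : ℕ × ℕ => (eH.symm (eH r.1 * eH r.2) : ℕ)) :=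
        continuous_of_discreteTopology
      exact hF.comp hpair
  have : WitnessSet eH = ({q : ↥GroupTables × (ℕ → ℕ) | Function.Injective q.2} ∩
      {q | Function.Surjective q.2}) ∩ {q : ↥GroupTables × (ℕ → ℕ) |
      ∀ a b : ℕ, q.2 (q.1.1 (a, b)) = eH.symm (eH (q.2 a) * eH (q.2 b))} := by
    ext q
    constructor
    · rintro ⟨⟨hi, hs⟩, hm⟩; exact ⟨⟨hi, hs⟩, hm⟩
    · rintro ⟨⟨hi, hs⟩, hm⟩; exact ⟨⟨hi, hs⟩, hm⟩
  rw [this]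
  exact (hinj.inter hsurj).inter hmul

lemma isoClass_eq_range (eH : ℕ ≃ H) :
    {G : ↥GroupTables | Nonempty (Carrier G ≃* H)} =
      range (fun q : ↥(WitnessSet eH) => q.1.1) := by
  ext G
  rw [mem_setOf_eq, mem_isoClass_iff eH]
  constructor
  · rintro ⟨f, hbij, hmul⟩
    exact ⟨⟨(G, f), hbij, hmul⟩, rfl⟩
  · rintro ⟨⟨⟨G', f⟩, hbij, hmul⟩, rfl⟩
    exact ⟨f, hbij, hmul⟩

lemma baireMeasurableSet_isoClass (eH : ℕ ≃ H) :
    BaireMeasurableSet {G : ↥GroupTables | Nonempty (Carrier G ≃* H)} := by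
  rw [isoClass_eq_range eH]
  haveI : PolishSpace ↥(WitnessSet eH) := IsGdelta.polishSpace' (isGdelta_witnessSet eH)
  exact baireMeasurableSet_range_of_polish (continuous_fst.comp continuous_subtype_val)

end IsoClass

lemma IsMeagre.union' {X : Type*} [TopologicalSpace X] {s t : Set X}
    (hs : IsMeagre s) (ht : IsMeagre t) : IsMeagre (s ∪ t) := by
  rw [IsMeagre, compl_union]
  exact inter_mem hs ht

/-- For every group `H`, the isomorphism class `I_H = {G ∈ 𝒢 : Ḡ ≅ H}` is either
meager or comeager in `𝒢`. -/
theorem isoClass_meager_or_comeager (H : Type*) [Group H] :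
    IsMeagre {G : ↥GroupTables | Nonempty (Carrier G ≃* H)} ∨
      {G : ↥GroupTables | Nonempty (Carrier G ≃* H)} ∈ residual ↥GroupTables := by
  classical
  set S := {G : ↥GroupTables | Nonempty (Carrier G ≃* H)} with hSdef
  by_cases hcnt : Nonempty (ℕ ≃ H)
  · obtain ⟨eH⟩ := hcnt
    have hbm : BaireMeasurableSet S := baireMeasurableSet_isoClass eH
    obtain ⟨U, hUo, hSU⟩ := hbm.residualEq_isOpen
    obtain ⟨V, hVo, hSV⟩ := hbm.compl.residualEq_isOpen
    have hM1 : IsMeagre {x : ↥GroupTables | x ∈ S ↔ x ∈ U}ᶜ := by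
      rw [IsMeagre, compl_compl]; exact eventuallyEq_set.1 hSU
    have hM2 : IsMeagre {x : ↥GroupTables | x ∈ Sᶜ ↔ x ∈ V}ᶜ := by
      rw [IsMeagre, compl_compl]; exact eventuallyEq_set.1 hSV
    rcases eq_empty_or_nonempty U with hUe | hUne
    · left
      apply hM1.mono
      intro x hx
      simp only [mem_compl_iff, mem_setOf_eq]
      intro hiff
      have := hiff.1 hx
      rw [hUe] at this
      exact this
    rcases eq_empty_or_nonempty V with hVe | hVne
    · right
      have hScme : IsMeagre Sᶜ := by
        apply hM2.mono
        intro x hx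
        simp only [mem_compl_iff, mem_setOf_eq]
        intro hiff
        have := hiff.1 hx
        rw [hVe] at this
        exact this
      rw [IsMeagre, compl_compl] at hScme
      exact hScme
    -- both nonempty : contradiction via transitivity
    exfalso
    obtain ⟨σ, hσ, G₂, hG₂U, hG₂V⟩ := exists_perm_image_mem hUo hVo hUne hVne
    set h : ↥GroupTables ≃ₜ ↥GroupTables := actHomeo σ hσ with hhdef
    have hinv : ∀ (τ : Equiv.Perm ℕ) (hτ : τ 0 = 0) (G : ↥GroupTables),
        G ∈ S → actHomeo τ hτ G ∈ S := by
      rintro τ hτ G ⟨φ⟩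
      exact ⟨(actMulEquiv τ hτ G).trans φ⟩
    set W : Set ↥GroupTables := (h '' U) ∩ V with hWdef
    have hWo : IsOpen W := (h.isOpen_image.2 hUo).inter hVo
    have hWne : W.Nonempty := ⟨h G₂, ⟨G₂, hG₂U, rfl⟩, hG₂V⟩
    have hWsub : W ⊆ (h.symm ⁻¹' {x : ↥GroupTables | x ∈ S ↔ x ∈ U}ᶜ) ∪
        {x : ↥GroupTables | x ∈ Sᶜ ↔ x ∈ V}ᶜ := by
      intro x hx
      by_cases hxS : x ∈ S
      · right
        simp only [mem_compl_iff, mem_setOf_eq]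
        intro hiff
        exact (hiff.2 hx.2) hxS
      · left
        simp only [mem_preimage, mem_compl_iff, mem_setOf_eq]
        intro hiff
        obtain ⟨u, huU, hux⟩ := hx.1
        have h1 : h.symm x ∈ U := by rw [← hux, Homeomorph.symm_apply_apply]; exact huU
        have h2 : h.symm x ∈ S := hiff.2 h1
        have h3 : h (h.symm x) ∈ S := hinv σ hσ _ h2
        rw [Homeomorph.apply_symm_apply] at h3
        exact hxS h3
    have hWme : IsMeagre W :=
      (IsMeagre.union' (hM1.preimage_of_isOpenMap h.symm.continuous h.symm.isOpenMap)
        hM2).mono hWsub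
    have hdense : Dense (Wᶜ : Set ↥GroupTables) := dense_of_mem_residual hWme
    obtain ⟨x, hxW, hxWc⟩ := hdense.inter_open_nonempty W hWo hWne
    exact hxWc hxW
  · left
    have hSe : S = ∅ := by
      ext G
      simp only [hSdef, mem_setOf_eq, mem_empty_iff_false, iff_false]
      rintro ⟨φ⟩
      exact hcnt ⟨(permToCarrier G 1).trans φ.toEquiv⟩
    rw [hSe]
    exact IsMeagre.empty
end

section
/- The set {G ∈ 𝒢 : Ḡ is algebraically closed} is comeager in 𝒢. -/
instance (α : Type*) [Countable α] : Countable (FreeGroup α) := by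
  unfold FreeGroup; infer_instance

namespace AlgCl

open Function Set

lemma mul_def (G : ↥GroupTables) (a b : ℕ) : toC G a * toC G b = toC G (G.1 (a, b)) := rfl

lemma one_def (G : ↥GroupTables) : (1 : Carrier G) = toC G 0 := rfl

lemma ilc_coord (a b : ℕ) : IsLocallyConstant (fun G : ↥GroupTables => G.1 (a, b)) :=
  (IsLocallyConstant.iff_continuous _).2 ((continuous_apply (a, b)).comp continuous_subtype_val)

lemma ilc_mul {u v : ↥GroupTables → ℕ} (hu : IsLocallyConstant u) (hv : IsLocallyConstant v) :
    IsLocallyConstant (fun G : ↥GroupTables => G.1 (u G, v G)) := by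
  rw [IsLocallyConstant.iff_exists_open]
  intro G₀
  obtain ⟨U, hUo, hGU, hU⟩ := hu.exists_open G₀
  obtain ⟨V, hVo, hGV, hV⟩ := hv.exists_open G₀
  refine ⟨U ∩ V ∩ {G | G.1 (u G₀, v G₀) = G₀.1 (u G₀, v G₀)}, ?_, ⟨⟨hGU, hGV⟩, rfl⟩, ?_⟩
  · exact (hUo.inter hVo).inter ((ilc_coord _ _).isOpen_fiber _)
  · rintro G ⟨⟨h1, h2⟩, h3⟩
    rw [hU G h1, hV G h2]; exact h3

lemma inv_eq_of_table {G : ↥GroupTables} {a b : ℕ} (h : G.1 (a, b) = 0) :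
    (toC G a)⁻¹ = toC G b :=
  inv_eq_of_mul_eq_one_right (show toC G a * toC G b = 1 from congrArg (toC G) h)

lemma ilc_inv {u : ↥GroupTables → ℕ} (hu : IsLocallyConstant u) :
    IsLocallyConstant fun G => fromC G (toC G (u G))⁻¹ := by
  rw [IsLocallyConstant.iff_exists_open]
  intro G₀
  obtain ⟨U, hUo, hGU, hU⟩ := hu.exists_open G₀
  set a := u G₀ with ha
  set b := fromC G₀ (toC G₀ a)⁻¹ with hb
  refine ⟨U ∩ {G | G.1 (a, b) = 0}, hUo.inter ((ilc_coord a b).isOpen_fiber 0), ⟨hGU, ?_⟩, ?_⟩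
  · show G₀.1 (a, b) = 0
    have : toC G₀ a * toC G₀ b = 1 := mul_inv_cancel (toC G₀ a)
    exact this
  · rintro G ⟨h1, h2⟩
    show fromC G (toC G (u G))⁻¹ = fromC G₀ (toC G₀ a)⁻¹
    rw [hU G h1]
    rw [inv_eq_of_table h2]
    rfl

noncomputable def ev {n : ℕ} (x' : Fin n → ℕ) (W : FreeGroup (Fin n ⊕ ℕ)) (G : ↥GroupTables) : ℕ :=
  fromC G (FreeGroup.lift (Sum.elim (fun i => toC G (x' i)) (toC G)) W)

lemma ev_one {n : ℕ} (x' : Fin n → ℕ) : ev x' 1 = fun _ => 0 := by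
  funext G; unfold ev; rw [map_one]; rfl

lemma ev_pure {n : ℕ} (x' : Fin n → ℕ) (s : Fin n ⊕ ℕ) :
    ev x' (pure s) = fun G => Sum.elim x' id s := by
  funext G; unfold ev
  rw [show (pure s : FreeGroup (Fin n ⊕ ℕ)) = FreeGroup.of s from rfl, FreeGroup.lift_apply_of]
  cases s <;> rfl

lemma ev_inv_pure {n : ℕ} (x' : Fin n → ℕ) (s : Fin n ⊕ ℕ) :
    ev x' (pure s)⁻¹ = fun G => fromC G (toC G (Sum.elim x' id s))⁻¹ := by
  funext G; unfold ev
  rw [map_inv, show (pure s : FreeGroup (Fin n ⊕ ℕ)) = FreeGroup.of s from rfl, FreeGroup.lift_apply_of]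
  cases s <;> rfl

lemma ev_mul {n : ℕ} (x' : Fin n → ℕ) (W₁ W₂ : FreeGroup (Fin n ⊕ ℕ)) :
    ev x' (W₁ * W₂) = fun G => G.1 (ev x' W₁ G, ev x' W₂ G) := by
  funext G; unfold ev; rw [map_mul]; rfl

lemma ilc_ev {n : ℕ} (x' : Fin n → ℕ) (W : FreeGroup (Fin n ⊕ ℕ)) :
    IsLocallyConstant (ev x' W) := by
  induction W using FreeGroup.induction_on with
  | C1 => rw [ev_one]; exact IsLocallyConstant.const 0
  | of s => rw [show FreeGroup.of s = (pure s : FreeGroup (Fin n ⊕ ℕ)) from rfl, ev_pure]; exact IsLocallyConstant.const _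
  | inv_of s _ => rw [show FreeGroup.of s = (pure s : FreeGroup (Fin n ⊕ ℕ)) from rfl, ev_inv_pure]; exact ilc_inv (IsLocallyConstant.const _)
  | mul W₁ W₂ h1 h2 => rw [ev_mul]; exact ilc_mul h1 h2


def consts {n : ℕ} (W : FreeGroup (Fin n ⊕ ℕ)) : Finset ℕ :=
  (W.toWord.filterMap (fun sb => sb.1.getRight?)).toFinset

lemma mem_consts {n : ℕ} {W : FreeGroup (Fin n ⊕ ℕ)} {m : ℕ} {b : Bool}
    (h : (Sum.inr m, b) ∈ W.toWord) : m ∈ consts W := by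
  simp only [consts, List.mem_toFinset, List.mem_filterMap]
  exact ⟨(Sum.inr m, b), h, rfl⟩

lemma lift_congr_letters {n : ℕ} {Γ : Type*} [Group Γ] {g₁ g₂ : Fin n ⊕ ℕ → Γ}
    (W : FreeGroup (Fin n ⊕ ℕ))
    (h : ∀ s b, (s, b) ∈ W.toWord → g₁ s = g₂ s) :
    FreeGroup.lift g₁ W = FreeGroup.lift g₂ W := by
  conv_lhs => rw [← FreeGroup.mk_toWord (x := W)]
  conv_rhs => rw [← FreeGroup.mk_toWord (x := W)]
  rw [FreeGroup.lift_mk, FreeGroup.lift_mk]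
  congr 1
  apply List.map_congr_left
  rintro ⟨s, b⟩ hsb
  rw [h s b hsb]

lemma exists_equiv_extend {β : Type} [Countable β] [Infinite β] (F : Finset ℕ) (ι : ℕ → β)
    (hι : Function.Injective ι) : ∃ e : ℕ ≃ β, ∀ m ∈ F, e m = ι m := by
  classical
  set s : Set ℕ := ↑F with hs
  have hsfin : s.Finite := F.finite_toSet
  have h1 : (sᶜ : Set ℕ).Infinite := hsfin.infinite_compl
  have h2 : ((ι '' s)ᶜ : Set β).Infinite := (hsfin.image ι).infinite_compl
  have i1 : Infinite (sᶜ : Set ℕ) := h1.to_subtype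
  have i2 : Infinite ((ι '' s)ᶜ : Set β) := h2.to_subtype
  obtain ⟨e₂⟩ : Nonempty ((sᶜ : Set ℕ) ≃ ((ι '' s)ᶜ : Set β)) := nonempty_equiv_of_countable
  let e₁ : s ≃ (ι '' s) := Equiv.Set.image ι s hι
  refine ⟨(Equiv.Set.sumCompl s).symm.trans ((e₁.sumCongr e₂).trans (Equiv.Set.sumCompl (ι '' s))), ?_⟩
  intro m hm
  have hms : m ∈ s := hm
  simp [Equiv.Set.sumCompl_symm_apply_of_mem hms, e₁, Equiv.Set.image, Equiv.Set.imageOfInjOn]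

lemma exists_cylinder {U : Set ↥GroupTables} (hU : IsOpen U) {G₀ : ↥GroupTables} (hG₀ : G₀ ∈ U) :
    ∃ I : Finset (ℕ × ℕ), ∀ G : ↥GroupTables, (∀ p ∈ I, G.1 p = G₀.1 p) → G ∈ U := by
  obtain ⟨t, ht, rfl⟩ := isOpen_induced_iff.mp hU
  obtain ⟨I, u, hu, hI⟩ := isOpen_pi_iff.mp ht G₀.1 hG₀
  refine ⟨I, fun G hG => ?_⟩
  apply hI
  intro p hp
  rw [hG p (Finset.mem_coe.mp hp)]
  exact (hu p (Finset.mem_coe.mp hp)).2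

section TableOf
variable {B : Type} [Group B]

def tableOf (e : ℕ ≃ B) : ℕ × ℕ → ℕ := fun p => e.symm (e p.1 * e p.2)

lemma tableOf_mem (e : ℕ ≃ B) (h0 : e 0 = 1) : tableOf e ∈ GroupTables := by
  have h0' : e.symm 1 = 0 := by rw [← h0, e.symm_apply_apply]
  refine ⟨fun a b c => ?_, fun a => ?_, fun a => ?_, fun a => ?_⟩
  · simp [tableOf, Equiv.apply_symm_apply, mul_assoc]
  · simp [tableOf, h0]
  · simp [tableOf, h0]
  · exact ⟨e.symm (e a)⁻¹, by simp [tableOf, Equiv.apply_symm_apply, h0'],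
      by simp [tableOf, Equiv.apply_symm_apply, h0']⟩

noncomputable def mulEquivOf (e : ℕ ≃ B) (h0 : e 0 = 1) :
    Carrier ⟨tableOf e, tableOf_mem e h0⟩ ≃* B where
  toFun x := e (fromC _ x)
  invFun y := toC _ (e.symm y)
  left_inv x := e.symm_apply_apply _
  right_inv y := e.apply_symm_apply _
  map_mul' x y := by
    show e (e.symm (e (fromC _ x) * e (fromC _ y))) = _
    rw [Equiv.apply_symm_apply]

end TableOf

section Params
variable {n k l : ℕ} (W : Fin k → FreeGroup (Fin n ⊕ ℕ)) (V : Fin l → FreeGroup (Fin n ⊕ ℕ))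

def solSet : Set ↥GroupTables :=
  {G | ∃ x' : Fin n → ℕ, (∀ i, ev x' (W i) G = 0) ∧ ∀ j, ev x' (V j) G ≠ 0}

def hypSet : Set ↥GroupTables :=
  {G | ∃ (H : Type) (_ : Group H) (f : Carrier G →* H), Function.Injective f ∧
    ∃ x : Fin n → H,
      (∀ i, FreeGroup.lift (Sum.elim x (fun m => f (toC G m))) (W i) = 1) ∧
      (∀ j, FreeGroup.lift (Sum.elim x (fun m => f (toC G m))) (V j) ≠ 1)}

lemma isOpen_solSet : IsOpen (solSet W V) := by
  have hrw : solSet W V =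
      ⋃ x' : Fin n → ℕ, ((⋂ i, {G | ev x' (W i) G = 0}) ∩ ⋂ j, {G | ev x' (V j) G = 0}ᶜ) := by
    ext G
    simp only [solSet, mem_setOf_eq, mem_iUnion, mem_inter_iff, mem_iInter, mem_compl_iff]
  rw [hrw]
  refine isOpen_iUnion fun x' => IsOpen.inter ?_ ?_
  · exact isOpen_iInter_of_finite fun i => (ilc_ev x' (W i)).isOpen_fiber 0
  · exact isOpen_iInter_of_finite fun j => isOpen_compl_iff.mpr
      ((isClosed_singleton (x := (0:ℕ))).preimage (ilc_ev x' (V j)).continuous)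

lemma hypSet_subset_closure : hypSet W V ⊆ closure (solSet W V) := by
  rintro G₀ ⟨H, _, f, hfinj, x, hw, hv⟩
  rw [mem_closure_iff]
  intro U hUo hG₀U
  obtain ⟨I, hI⟩ := exists_cylinder hUo hG₀U
  classical
  -- a countable infinite group where the system is solvable
  set Φ : FreeGroup (Fin n ⊕ ℕ) →* H :=
    FreeGroup.lift (Sum.elim x (fun m => f (toC G₀ m))) with hΦ
  set K : Subgroup H := Φ.range with hK
  have hKc : Countable K := by
    have h := Set.countable_range ⇑Φ
    rw [← MonoidHom.coe_range Φ] at h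
    exact h.to_subtype
  set B := (K × Multiplicative ℤ) with hB
  have hBc : Countable B := inferInstance
  have hBi : Infinite B := inferInstance
  set ι : ℕ → B := (fun m => (⟨f (toC G₀ m), ⟨FreeGroup.of (Sum.inr m), by simp [hΦ]⟩⟩, 1)) with hι
  have hιinj : Function.Injective ι := by
    intro a b h
    have h1 : f (toC G₀ a) = f (toC G₀ b) := congrArg (fun z => (z.1 : H)) h
    exact hfinj h1
  set x₂ : Fin n → B := (fun i => (⟨x i, ⟨FreeGroup.of (Sum.inl i), by simp [hΦ]⟩⟩, 1)) with hx₂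
  set L : FreeGroup (Fin n ⊕ ℕ) →* B := FreeGroup.lift (Sum.elim x₂ ι) with hL
  have h1 : K.subtype.comp ((MonoidHom.fst K (Multiplicative ℤ)).comp L) = Φ := by
    apply FreeGroup.ext_hom
    rintro (i | m) <;> simp [hL, hΦ, hx₂, hι]
  have h2 : (MonoidHom.snd K (Multiplicative ℤ)).comp L = 1 := by
    apply FreeGroup.ext_hom
    rintro (i | m) <;> simp [hL, hx₂, hι]
  have hLfst : ∀ g, ((L g).1 : H) = Φ g := fun g => by
    have := DFunLike.congr_fun h1 g
    simpa using this
  have hLsnd : ∀ g, (L g).2 = 1 := fun g => DFunLike.congr_fun h2 g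
  have hβw : ∀ i, L (W i) = 1 := by
    intro i
    have hf : ((L (W i)).1 : H) = ((1 : K) : H) := by
      rw [hLfst (W i)]
      simpa using hw i
    exact Prod.ext (Subtype.ext hf) (hLsnd (W i))
  have hβv : ∀ j, L (V j) ≠ 1 := by
    intro j hj
    apply hv j
    have := hLfst (V j)
    rw [hj] at this
    simpa using this.symm
  -- finite set of constraints
  set F : Finset ℕ :=
    ((I.image Prod.fst ∪ I.image Prod.snd ∪ I.image (fun p => G₀.1 p)) ∪ {0})
      ∪ (Finset.univ.biUnion fun i => consts (W i))
      ∪ (Finset.univ.biUnion fun j => consts (V j)) with hF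
  obtain ⟨e, he⟩ := exists_equiv_extend F ι hιinj
  have h0F : (0 : ℕ) ∈ F := by simp [hF]
  have h0 : e 0 = 1 := by
    rw [he 0 h0F]
    exact Prod.ext (Subtype.ext (map_one f)) rfl
  set G₁ : ↥GroupTables := ⟨tableOf e, tableOf_mem e h0⟩ with hG₁
  have heF : ∀ c ∈ F, e.symm (ι c) = c := by
    intro c hc
    rw [← he c hc, e.symm_apply_apply]
  have hG₁U : G₁ ∈ U := by
    apply hI
    rintro ⟨a, b⟩ hp
    have haF : a ∈ F := by
      simp only [hF, Finset.mem_union]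
      exact Or.inl (Or.inl (Or.inl (Or.inl (Or.inl (Finset.mem_image.2 ⟨(a,b), hp, rfl⟩)))))
    have hbF : b ∈ F := by
      simp only [hF, Finset.mem_union]
      exact Or.inl (Or.inl (Or.inl (Or.inl (Or.inr (Finset.mem_image.2 ⟨(a,b), hp, rfl⟩)))))
    have hcF : G₀.1 (a, b) ∈ F := by
      simp only [hF, Finset.mem_union]
      exact Or.inl (Or.inl (Or.inl (Or.inr (Finset.mem_image.2 ⟨(a,b), hp, rfl⟩))))
    show e.symm (e a * e b) = G₀.1 (a, b)
    rw [he a haF, he b hbF]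
    have hmul : ι a * ι b = ι (G₀.1 (a, b)) := by
      refine Prod.ext (Subtype.ext ?_) rfl
      show f (toC G₀ a) * f (toC G₀ b) = f (toC G₀ (G₀.1 (a, b)))
      rw [← map_mul]
      rfl
    rw [hmul, heF _ hcF]
  -- the solution inside G₁
  set μ := mulEquivOf e h0 with hμ
  set x'' : Fin n → ℕ := fun i => e.symm (x₂ i) with hx''
  have hcomm : μ.toMonoidHom.comp
      (FreeGroup.lift (Sum.elim (fun i => toC G₁ (x'' i)) (toC G₁))) =
      FreeGroup.lift (Sum.elim x₂ (fun m => e m)) := by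
    apply FreeGroup.ext_hom
    rintro (i | m)
    · simp only [MonoidHom.comp_apply, FreeGroup.lift_apply_of, MulEquiv.coe_toMonoidHom]
      show e (x'' i) = x₂ i
      rw [hx'', e.apply_symm_apply]
    · simp only [MonoidHom.comp_apply, FreeGroup.lift_apply_of, MulEquiv.coe_toMonoidHom]
      rfl
  have hagree : ∀ (g : FreeGroup (Fin n ⊕ ℕ)), (∀ m' b', (Sum.inr m', b') ∈ g.toWord → m' ∈ F) →
      FreeGroup.lift (Sum.elim x₂ (fun m => e m)) g = L g := by
    intro g hg
    apply lift_congr_letters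
    rintro (i | m) b hsb
    · rfl
    · show e m = ι m
      exact he m (hg m b hsb)
  have hWF : ∀ i m' b', (Sum.inr m', b') ∈ (W i).toWord → m' ∈ F := by
    intro i m' b' hmem
    simp only [hF, Finset.mem_union]
    exact Or.inl (Or.inr (Finset.mem_biUnion.2 ⟨i, Finset.mem_univ i, mem_consts hmem⟩))
  have hVF : ∀ j m' b', (Sum.inr m', b') ∈ (V j).toWord → m' ∈ F := by
    intro j m' b' hmem
    simp only [hF, Finset.mem_union]
    exact Or.inr (Finset.mem_biUnion.2 ⟨j, Finset.mem_univ j, mem_consts hmem⟩)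
  have hμlift : ∀ g : FreeGroup (Fin n ⊕ ℕ),
      μ (FreeGroup.lift (Sum.elim (fun i => toC G₁ (x'' i)) (toC G₁)) g) =
      FreeGroup.lift (Sum.elim x₂ (fun m => e m)) g := fun g => DFunLike.congr_fun hcomm g
  refine ⟨G₁, hG₁U, x'', fun i => ?_, fun j hev => ?_⟩
  · show fromC G₁ (FreeGroup.lift (Sum.elim (fun i => toC G₁ (x'' i)) (toC G₁)) (W i)) = 0
    have : FreeGroup.lift (Sum.elim (fun i => toC G₁ (x'' i)) (toC G₁)) (W i) = 1 := by
      apply μ.injective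
      rw [hμlift, map_one, hagree _ (hWF i)]
      exact hβw i
    exact congrArg (fromC G₁) this
  · apply hβv j
    rw [← hagree _ (hVF j), ← hμlift]
    have h1' : FreeGroup.lift (Sum.elim (fun i => toC G₁ (x'' i)) (toC G₁)) (V j) = 1 := hev
    rw [h1', map_one]

lemma residual_step : {G | G ∈ hypSet W V → G ∈ solSet W V} ∈ residual ↥GroupTables := by
  have hT : IsOpen (solSet W V ∪ (closure (solSet W V))ᶜ) :=
    (isOpen_solSet W V).union isClosed_closure.isOpen_compl
  have hD : Dense (solSet W V ∪ (closure (solSet W V))ᶜ) := by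
    rw [dense_iff_inter_open]
    intro U hUo hUne
    obtain ⟨G, hG⟩ := hUne
    by_cases h : G ∈ closure (solSet W V)
    · obtain ⟨G', hG'U, hG's⟩ := mem_closure_iff.mp h U hUo hG
      exact ⟨G', hG'U, Or.inl hG's⟩
    · exact ⟨G, hG, Or.inr h⟩
  refine Filter.mem_of_superset (residual_of_dense_open hT hD) ?_
  rintro G (h | h)
  · exact fun _ => h
  · exact fun hhyp => absurd (hypSet_subset_closure W V hhyp) h

end Params

end AlgCl

universe u

/-- A group `G` is algebraically closed if every finite system of equations and
inequations with coefficients from `G` (elements of the free product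
`FreeGroup (Fin n) ∗ G`) that has a solution in some group extending `G`
has a solution in `G` itself. -/
def IsAlgClosedGroup (G : Type u) [Group G] : Prop :=
  ∀ (n k l : ℕ) (w : Fin k → Monoid.Coprod (FreeGroup (Fin n)) G)
    (v : Fin l → Monoid.Coprod (FreeGroup (Fin n)) G),
    (∃ (H : Type u) (_ : Group H) (f : G →* H), Function.Injective f ∧
      ∃ x : Fin n → H,
        (∀ i, Monoid.Coprod.lift (FreeGroup.lift x) f (w i) = 1) ∧
        (∀ j, Monoid.Coprod.lift (FreeGroup.lift x) f (v j) ≠ 1)) →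
    ∃ x' : Fin n → G,
      (∀ i, Monoid.Coprod.lift (FreeGroup.lift x') (MonoidHom.id G) (w i) = 1) ∧
      (∀ j, Monoid.Coprod.lift (FreeGroup.lift x') (MonoidHom.id G) (v j) ≠ 1)

/-- The set of tables `G ∈ 𝒢` whose group `Ḡ` is algebraically closed is
comeager in `𝒢`. -/
theorem algClosed_comeager :
    {G : ↥GroupTables | IsAlgClosedGroup (Carrier G)} ∈ residual ↥GroupTables := by
  classical
  set P : Type := Σ n k l : ℕ, (Fin k → FreeGroup (Fin n ⊕ ℕ)) × (Fin l → FreeGroup (Fin n ⊕ ℕ))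
    with hP
  have hPc : Countable P := inferInstance
  have hbig : (⋂ p : P, {G | G ∈ AlgCl.hypSet p.2.2.2.1 p.2.2.2.2 →
      G ∈ AlgCl.solSet p.2.2.2.1 p.2.2.2.2}) ∈ residual ↥GroupTables :=
    countable_iInter_mem.2 fun p => AlgCl.residual_step p.2.2.2.1 p.2.2.2.2
  refine Filter.mem_of_superset hbig ?_
  intro G hG
  intro n k l w v hyp
  -- the surjection from the free group onto the coproduct
  set ψ : FreeGroup (Fin n ⊕ ℕ) →* Monoid.Coprod (FreeGroup (Fin n)) (Carrier G) :=
    FreeGroup.lift (Sum.elim (fun i => Monoid.Coprod.inl (FreeGroup.of i))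
      (fun m => Monoid.Coprod.inr (toC G m))) with hψ
  have hsurj : Function.Surjective ψ := by
    intro c
    induction c using Monoid.Coprod.induction_on with
    | inl m =>
      refine ⟨FreeGroup.lift (fun i => FreeGroup.of (Sum.inl i)) m, ?_⟩
      have hcmp : ψ.comp (FreeGroup.lift (fun i : Fin n => FreeGroup.of (Sum.inl i))) =
          (Monoid.Coprod.inl : FreeGroup (Fin n) →* _) := by
        apply FreeGroup.ext_hom
        intro i
        simp [hψ]
      exact DFunLike.congr_fun hcmp m
    | inr y =>
      exact ⟨FreeGroup.of (Sum.inr (fromC G y)), by rw [hψ, FreeGroup.lift_apply_of]; rfl⟩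
    | mul c₁ c₂ h₁ h₂ =>
      obtain ⟨g₁, rfl⟩ := h₁
      obtain ⟨g₂, rfl⟩ := h₂
      exact ⟨g₁ * g₂, map_mul ψ g₁ g₂⟩
  set Wp : Fin k → FreeGroup (Fin n ⊕ ℕ) := fun i => (hsurj (w i)).choose with hWp
  set Vp : Fin l → FreeGroup (Fin n ⊕ ℕ) := fun j => (hsurj (v j)).choose with hVp
  have hWps : ∀ i, ψ (Wp i) = w i := fun i => (hsurj (w i)).choose_spec
  have hVps : ∀ j, ψ (Vp j) = v j := fun j => (hsurj (v j)).choose_spec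
  have hcomp : ∀ (Q : Type) (_ : Group Q) (g : Fin n → Q) (f : Carrier G →* Q),
      (Monoid.Coprod.lift (FreeGroup.lift g) f).comp ψ =
        FreeGroup.lift (Sum.elim g (fun m => f (toC G m))) := by
    intro Q _ g f
    apply FreeGroup.ext_hom
    rintro (i | m) <;> simp [hψ]
  have hGp := Set.mem_iInter.mp hG (⟨n, k, l, Wp, Vp⟩ : P)
  have hhyp : G ∈ AlgCl.hypSet Wp Vp := by
    obtain ⟨H, instH, f, hfinj, x, hw, hv⟩ := hyp
    refine ⟨H, instH, f, hfinj, x, fun i => ?_, fun j hj => ?_⟩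
    · rw [← DFunLike.congr_fun (hcomp H instH x f) (Wp i)]
      show Monoid.Coprod.lift (FreeGroup.lift x) f (ψ (Wp i)) = 1
      rw [hWps i]
      exact hw i
    · apply hv j
      rw [← hVps j]
      show (Monoid.Coprod.lift (FreeGroup.lift x) f).comp ψ (Vp j) = 1
      rw [hcomp H instH x f]
      exact hj
  obtain ⟨x'₀, hx'w, hx'v⟩ := hGp hhyp
  refine ⟨fun i => toC G (x'₀ i), fun i => ?_, fun j hj => ?_⟩
  · rw [← hWps i]
    show (Monoid.Coprod.lift (FreeGroup.lift fun i => toC G (x'₀ i))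
      (MonoidHom.id (Carrier G))).comp ψ (Wp i) = 1
    rw [hcomp (Carrier G) _ (fun i => toC G (x'₀ i)) (MonoidHom.id (Carrier G))]
    have : FreeGroup.lift (Sum.elim (fun i => toC G (x'₀ i)) (toC G)) (Wp i) = 1 := hx'w i
    exact this
  · apply hx'v j
    show fromC G (FreeGroup.lift (Sum.elim (fun i => toC G (x'₀ i)) (toC G)) (Vp j)) = 0
    have h1 : FreeGroup.lift (Sum.elim (fun i => toC G (x'₀ i)) (toC G)) (Vp j) = 1 := by
      have h2 : (Monoid.Coprod.lift (FreeGroup.lift fun i => toC G (x'₀ i))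
          (MonoidHom.id (Carrier G))).comp ψ (Vp j) = 1 := by
        show Monoid.Coprod.lift _ _ (ψ (Vp j)) = 1
        rw [hVps j]
        exact hj
      rw [hcomp (Carrier G) _ (fun i => toC G (x'₀ i)) (MonoidHom.id (Carrier G))] at h2
      exact h2
    exact congrArg (fromC G) h1
end

section
/- Let n, k, l ∈ ℕ and let U₁,…,U_k, V₁,…,V_l be elements of the free group on n generators. If there exist a group H and elements a₁,…,aₙ ∈ H such that Uᵢ(a₁,…,aₙ) = 1 for all i ≤ k and Vⱼ(a₁,…,aₙ) ≠ 1 for all j ≤ l, then every algebraically closed group G contains elements b₁,…,bₙ with Uᵢ(b₁,…,bₙ) = 1 for all i ≤ k and Vⱼ(b₁,…,bₙ) ≠ 1 for all j ≤ l. -/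
universe u

universe v

/-- If a finite system of equations `Uᵢ = 1` and inequations `Vⱼ ≠ 1` of group words
in `n` generators has a solution in some group `H`, then it has a solution in every
algebraically closed group `G`. -/
theorem solvable_in_algClosed_of_solvable (n k l : ℕ)
    (U : Fin k → FreeGroup (Fin n)) (V : Fin l → FreeGroup (Fin n))
    (H : Type v) [Group H] (a : Fin n → H)
    (hU : ∀ i, FreeGroup.lift a (U i) = 1) (hV : ∀ j, FreeGroup.lift a (V j) ≠ 1)
    (G : Type u) [Group G] (hG : IsAlgClosedGroup G) :
    ∃ b : Fin n → G, (∀ i, FreeGroup.lift b (U i) = 1) ∧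
      ∀ j, FreeGroup.lift b (V j) ≠ 1 := by
  -- Build a witness group in `Type u`: `G × ULift (FreeGroup (Fin n) ⧸ ker (lift a))`.
  classical
  set N := (FreeGroup.lift a).ker with hN
  let Q := FreeGroup (Fin n) ⧸ N
  let π : FreeGroup (Fin n) →* ULift.{u} Q :=
    (MulEquiv.ulift.symm.toMonoidHom).comp (QuotientGroup.mk' N)
  have hπ : ∀ g : FreeGroup (Fin n), π g = 1 ↔ FreeGroup.lift a g = 1 := by
    intro g
    simp only [π, MonoidHom.comp_apply]
    constructor
    · intro h
      have h1 : QuotientGroup.mk' N g = 1 :=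
        MulEquiv.ulift.symm.injective (by rw [map_one]; exact h)
      exact MonoidHom.mem_ker.mp ((QuotientGroup.eq_one_iff g).mp h1)
    · intro h
      have h1 : QuotientGroup.mk' N g = 1 :=
        (QuotientGroup.eq_one_iff g).mpr (MonoidHom.mem_ker.mpr h)
      simp [h1]
  let x : Fin n → G × ULift.{u} Q := fun i => ((1 : G), π (FreeGroup.of i))
  have hx : FreeGroup.lift x = MonoidHom.prod (1 : FreeGroup (Fin n) →* G) π := by
    apply FreeGroup.ext_hom
    intro i
    simp [x]
  have key := hG n k l (fun i => Monoid.Coprod.inl (U i)) (fun j => Monoid.Coprod.inl (V j))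
    ⟨G × ULift.{u} Q, inferInstance, MonoidHom.inl G (ULift.{u} Q),
      fun g₁ g₂ h => by simpa using congrArg Prod.fst h,
      x, ?_, ?_⟩
  · obtain ⟨b, hb1, hb2⟩ := key
    refine ⟨b, fun i => ?_, fun j => ?_⟩
    · have := hb1 i
      simpa using this
    · have := hb2 j
      simpa using this
  · intro i
    simp only [Monoid.Coprod.lift_apply_inl, hx]
    ext
    · simp
    · exact congrArg ULift.down ((hπ (U i)).mpr (hU i))
  · intro j
    simp only [Monoid.Coprod.lift_apply_inl, hx]
    intro hcon
    have : π (V j) = 1 := by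
      have := congrArg Prod.snd hcon
      simpa using this
    exact hV j ((hπ (V j)).mp this)
end

section
/- For every G₀ ∈ 𝒢 such that Ḡ₀ is algebraically closed, the isomorphism class {G ∈ 𝒢 : Ḡ ≅ Ḡ₀} is dense in 𝒢. -/
universe u

open Classical in
lemma exists_perm_extend (T : Finset ℕ) (Y : ℕ → ℕ) (hY : Set.InjOn Y ↑T) :
    ∃ σ : Equiv.Perm ℕ, ∀ s ∈ T, σ s = Y s := by
  classical
  set S : Set ℕ := ↑T with hS
  set S' : Set ℕ := Y '' S with hS'
  have hbij : Set.BijOn Y S S' := hY.bijOn_image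
  let e₁ : S ≃ S' := Set.BijOn.equiv Y hbij
  have hSfin : S.Finite := T.finite_toSet
  have hS'fin : S'.Finite := hSfin.image Y
  have h1 : Infinite ↥(Sᶜ) := hSfin.infinite_compl.to_subtype
  have h2 : Infinite ↥(S'ᶜ) := hS'fin.infinite_compl.to_subtype
  obtain ⟨e₂⟩ : Nonempty (↥(Sᶜ) ≃ ↥(S'ᶜ)) := nonempty_equiv_of_countable
  refine ⟨(Equiv.Set.sumCompl S).symm.trans ((Equiv.sumCongr e₁ e₂).trans
    (Equiv.Set.sumCompl S')), ?_⟩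
  intro s hs
  have hs' : s ∈ S := hs
  simp [Equiv.Set.sumCompl_symm_apply_of_mem hs', e₁, Set.BijOn.equiv]


lemma key (G₀ : ↥GroupTables) (h : IsAlgClosedGroup (Carrier G₀))
    (G : ↥GroupTables) (I : Finset (ℕ × ℕ)) :
    ∃ G' : ↥GroupTables, Nonempty (Carrier G' ≃* Carrier G₀) ∧ ∀ p ∈ I, G'.1 p = G.1 p := by
  classical
  set T : Finset ℕ := insert 0 ((I.image Prod.fst ∪ I.image Prod.snd) ∪ I.image G.1) with hT
  have h0T : (0 : ℕ) ∈ T := Finset.mem_insert_self _ _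
  have hmemT : ∀ p ∈ I, p.1 ∈ T ∧ p.2 ∈ T ∧ G.1 p ∈ T := by
    intro p hp
    refine ⟨Finset.mem_insert_of_mem ?_, Finset.mem_insert_of_mem ?_,
      Finset.mem_insert_of_mem ?_⟩
    · exact Finset.mem_union_left _ (Finset.mem_union_left _ (Finset.mem_image_of_mem _ hp))
    · exact Finset.mem_union_left _ (Finset.mem_union_right _ (Finset.mem_image_of_mem _ hp))
    · exact Finset.mem_union_right _ (Finset.mem_image_of_mem _ hp)
  set n := T.card with hn
  set e : ↥T ≃ Fin n := T.equivFin with he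
  set ι : ℕ → FreeGroup (Fin n) :=
    fun s => if hs : s ∈ T then FreeGroup.of (e ⟨s, hs⟩) else 1 with hι
  have hι_pos : ∀ (s : ℕ) (hs : s ∈ T), ι s = FreeGroup.of (e ⟨s, hs⟩) := by
    intro s hs; rw [hι]; exact dif_pos hs
  set Lw : List (Monoid.Coprod (FreeGroup (Fin n)) (Carrier G₀)) :=
    Monoid.Coprod.inl (ι 0) ::
      I.toList.map (fun p => Monoid.Coprod.inl (ι p.1 * ι p.2 * (ι (G.1 p))⁻¹)) with hLw
  set Lv : List (Monoid.Coprod (FreeGroup (Fin n)) (Carrier G₀)) :=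
    (((T ×ˢ T).filter (fun q => q.1 ≠ q.2)).toList).map
      (fun q => Monoid.Coprod.inl (ι q.1 * (ι q.2)⁻¹)) with hLv
  -- the solution in an extension
  have hsol : ∃ (H : Type) (_ : Group H) (f : Carrier G₀ →* H), Function.Injective f ∧
      ∃ x : Fin n → H,
        (∀ i, Monoid.Coprod.lift (FreeGroup.lift x) f (Lw.get i) = 1) ∧
        (∀ j, Monoid.Coprod.lift (FreeGroup.lift x) f (Lv.get j) ≠ 1) := by
    set x : Fin n → Carrier G₀ × Carrier G :=
      fun i => (1, toC G ((e.symm i : ↥T) : ℕ)) with hx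
    have hxval : ∀ (s : ℕ) (hs : s ∈ T),
        FreeGroup.lift x (ι s) = ((1 : Carrier G₀), toC G s) := by
      intro s hs
      rw [hι_pos s hs, FreeGroup.lift_apply_of, hx]
      simp only [Equiv.symm_apply_apply]
    refine ⟨Carrier G₀ × Carrier G, inferInstance, MonoidHom.inl _ _,
      fun a b hab => congrArg Prod.fst hab, x, ?_, ?_⟩
    · intro i
      have hmem : Lw.get i ∈ Lw := Lw.get_mem _
      rcases List.mem_cons.1 hmem with h1 | h2
      · rw [h1, Monoid.Coprod.lift_apply_inl, hxval 0 h0T]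
        have : toC G 0 = (1 : Carrier G) := rfl
        rw [this]; rfl
      · obtain ⟨p, hp, hpw⟩ := List.mem_map.1 h2
        have hpI : p ∈ I := Finset.mem_toList.1 hp
        obtain ⟨h1, h2', h3⟩ := hmemT p hpI
        rw [← hpw, Monoid.Coprod.lift_apply_inl, map_mul, map_mul, map_inv,
          hxval _ h1, hxval _ h2', hxval _ h3]
        have hsnd : toC G p.1 * toC G p.2 = toC G (G.1 p) := by
          show G.1 (p.1, p.2) = G.1 p
          exact congrArg G.1 rfl
        have hpr : ((1 : Carrier G₀), toC G p.1) * (1, toC G p.2) *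
            ((1 : Carrier G₀), toC G (G.1 p))⁻¹ =
            (1 * 1 * 1⁻¹, toC G p.1 * toC G p.2 * (toC G (G.1 p))⁻¹) := rfl
        rw [hpr, hsnd, mul_inv_cancel]
        simp
    · intro j hj1
      have hmem : Lv.get j ∈ Lv := Lv.get_mem _
      obtain ⟨q, hq, hqw⟩ := List.mem_map.1 hmem
      have hqmem := Finset.mem_toList.1 hq
      rw [Finset.mem_filter] at hqmem
      obtain ⟨hqT, hqne⟩ := hqmem
      rw [Finset.mem_product] at hqT
      rw [← hqw, Monoid.Coprod.lift_apply_inl, map_mul, map_inv,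
        hxval _ hqT.1, hxval _ hqT.2] at hj1
      have hsnd : toC G q.1 * (toC G q.2)⁻¹ = (1 : Carrier G) := congrArg Prod.snd hj1
      have hqq : toC G q.1 = toC G q.2 := mul_inv_eq_one.1 hsnd
      exact hqne hqq
  obtain ⟨x', hw', hv'⟩ := h n Lw.length Lv.length Lw.get Lv.get hsol
  set y : ℕ → Carrier G₀ := fun s => if hs : s ∈ T then x' (e ⟨s, hs⟩) else 1 with hy
  have hx'val : ∀ (s : ℕ) (hs : s ∈ T), FreeGroup.lift x' (ι s) = y s := by
    intro s hs
    rw [hι_pos s hs, FreeGroup.lift_apply_of]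
    show x' (e ⟨s, hs⟩) = if hs' : s ∈ T then x' (e ⟨s, hs'⟩) else 1
    rw [dif_pos hs]
  have hw'' : ∀ wd ∈ Lw,
      Monoid.Coprod.lift (FreeGroup.lift x') (MonoidHom.id _) wd = 1 := by
    intro wd hwd
    obtain ⟨i, hi⟩ := List.mem_iff_get.1 hwd
    rw [← hi]; exact hw' i
  have hv'' : ∀ wd ∈ Lv,
      Monoid.Coprod.lift (FreeGroup.lift x') (MonoidHom.id _) wd ≠ 1 := by
    intro wd hwd
    obtain ⟨j, hj⟩ := List.mem_iff_get.1 hwd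
    rw [← hj]; exact hv' j
  have hy0 : y 0 = 1 := by
    have := hw'' (Monoid.Coprod.inl (ι 0)) List.mem_cons_self
    rwa [Monoid.Coprod.lift_apply_inl, hx'val 0 h0T] at this
  have hyI : ∀ p ∈ I, y p.1 * y p.2 = y (G.1 p) := by
    intro p hp
    obtain ⟨h1, h2', h3⟩ := hmemT p hp
    have hmem : Monoid.Coprod.inl (ι p.1 * ι p.2 * (ι (G.1 p))⁻¹) ∈ Lw := by
      rw [hLw]
      exact List.mem_cons_of_mem _ (List.mem_map.2 ⟨p, Finset.mem_toList.2 hp, rfl⟩)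
    have := hw'' _ hmem
    rw [Monoid.Coprod.lift_apply_inl, map_mul, map_mul, map_inv,
      hx'val _ h1, hx'val _ h2', hx'val _ h3] at this
    exact mul_inv_eq_one.1 this
  have hyinj : ∀ s ∈ T, ∀ t ∈ T, fromC G₀ (y s) = fromC G₀ (y t) → s = t := by
    intro s hs t ht hst
    by_contra hne
    have hmem : Monoid.Coprod.inl (ι s * (ι t)⁻¹) ∈ Lv := by
      rw [hLv]
      refine List.mem_map.2 ⟨(s, t), Finset.mem_toList.2 ?_, rfl⟩
      exact Finset.mem_filter.2 ⟨Finset.mem_product.2 ⟨hs, ht⟩, hne⟩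
    have := hv'' _ hmem
    rw [Monoid.Coprod.lift_apply_inl, map_mul, map_inv, hx'val _ hs, hx'val _ ht] at this
    exact this (mul_inv_eq_one.2 hst)
  obtain ⟨σ, hσ⟩ := exists_perm_extend T (fun s => fromC G₀ (y s))
    (fun s hs t ht hst => hyinj s hs t ht hst)
  have hσ0 : σ 0 = 0 := by
    rw [hσ 0 h0T]
    show fromC G₀ (y 0) = 0
    rw [hy0]; rfl
  set G' : ℕ × ℕ → ℕ := fun p => σ.symm (G₀.1 (σ p.1, σ p.2)) with hG'
  have hG'mem : G' ∈ GroupTables := by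
    refine ⟨?_, ?_, ?_, ?_⟩
    · intro a b c
      show σ.symm (G₀.1 (σ (σ.symm (G₀.1 (σ a, σ b))), σ c)) =
        σ.symm (G₀.1 (σ a, σ (σ.symm (G₀.1 (σ b, σ c)))))
      rw [σ.apply_symm_apply, σ.apply_symm_apply, G₀.2.1]
    · intro a
      show σ.symm (G₀.1 (σ a, σ 0)) = a
      rw [hσ0, G₀.2.2.1, σ.symm_apply_apply]
    · intro a
      show σ.symm (G₀.1 (σ 0, σ a)) = a
      rw [hσ0, G₀.2.2.2.1, σ.symm_apply_apply]
    · intro a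
      obtain ⟨c, hc1, hc2⟩ := G₀.2.2.2.2 (σ a)
      refine ⟨σ.symm c, ?_, ?_⟩
      · show σ.symm (G₀.1 (σ a, σ (σ.symm c))) = 0
        rw [σ.apply_symm_apply, hc1]
        exact σ.symm_apply_eq.2 hσ0.symm
      · show σ.symm (G₀.1 (σ (σ.symm c), σ a)) = 0
        rw [σ.apply_symm_apply, hc2]
        exact σ.symm_apply_eq.2 hσ0.symm
  refine ⟨⟨G', hG'mem⟩, ⟨{ toEquiv := σ, map_mul' := ?_ }⟩, ?_⟩
  · intro a b
    exact σ.apply_symm_apply _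
  · intro p hp
    obtain ⟨h1, h2', h3⟩ := hmemT p hp
    show σ.symm (G₀.1 (σ p.1, σ p.2)) = G.1 p
    rw [hσ p.1 h1, hσ p.2 h2']
    have : G₀.1 (fromC G₀ (y p.1), fromC G₀ (y p.2)) = fromC G₀ (y p.1 * y p.2) := rfl
    rw [this, hyI p hp, ← hσ (G.1 p) h3, σ.symm_apply_apply]

/-- The isomorphism class of any algebraically closed group coded in `𝒢`
is dense in `𝒢`. -/
theorem algClosed_isoClass_dense (G₀ : ↥GroupTables)
    (h : IsAlgClosedGroup (Carrier G₀)) :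
    Dense {G : ↥GroupTables | Nonempty (Carrier G ≃* Carrier G₀)} := by
  intro G
  rw [mem_closure_iff_nhds]
  intro t ht
  rw [nhds_subtype] at ht
  obtain ⟨U, hU, hUsub⟩ := Filter.mem_comap.1 ht
  rw [nhds_pi] at hU
  obtain ⟨Iset, hIfin, t', ht', hsub⟩ := Filter.mem_pi.1 hU
  obtain ⟨G', ⟨iso⟩, hagree⟩ := key G₀ h G hIfin.toFinset
  refine ⟨G', ?_, ⟨iso⟩⟩
  apply hUsub
  show G'.1 ∈ U
  apply hsub
  intro i hi
  have hfix : G'.1 i = G.1 i := hagree i (hIfin.mem_toFinset.2 hi)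
  rw [hfix]
  have := ht' i
  rw [nhds_discrete] at this
  exact this
end

section
/- Let G and H be countable groups such that H is countably infinite and homogeneous. Then there is an injective group homomorphism G → H if and only if for every finitely generated subgroup K of G there is an injective group homomorphism K → H. -/
universe u v

/-- A countably infinite group `H` is homogeneous if every isomorphism between two
finitely generated subgroups of `H` extends to an automorphism of `H`. -/
def IsHomogeneousGroup (H : Type v) [Group H] : Prop :=
  ∀ (A B : Subgroup H), A.FG → B.FG → ∀ α : A ≃* B,
    ∃ β : H ≃* H, ∀ a : A, β (a : H) = (α a : H)

section Aux

variable {G : Type u} {H : Type v} [Group G] [Group H]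

/-- A subgroup whose subtype group is finitely generated is finitely generated. -/
lemma subgroupFG_of_groupFG (B : Subgroup H) (h : Group.FG B) : B.FG := by
  obtain ⟨S, hS⟩ := (Group.fg_def.mp h)
  refine (Subgroup.fg_iff B).mpr ⟨B.subtype '' (S : Set B), ?_, (S.finite_toSet.image _)⟩
  rw [← MonoidHom.map_closure, hS, ← MonoidHom.range_eq_map, Subgroup.range_subtype]

/-- The key extension step: given compatible finitely generated subgroups `A ≤ B` of `G`,
an injective homomorphism `A →* H`, and an injective homomorphism `B →* H`, homogeneity
of `H` lets us extend the embedding of `A` to an embedding of `B`. -/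
lemma extend_step (hH : IsHomogeneousGroup H) {A B : Subgroup G} (hAB : A ≤ B)
    (hAfg : Group.FG A) (f : A →* H) (hf : Function.Injective f)
    (h : B →* H) (hh : Function.Injective h) :
    ∃ f' : B →* H, Function.Injective f' ∧
      ∀ (x : G) (hx : x ∈ A), f' ⟨x, hAB hx⟩ = f ⟨x, hx⟩ := by
  set h' : A →* H := h.comp (Subgroup.inclusion hAB) with hh'def
  have hh' : Function.Injective h' := hh.comp (Subgroup.inclusion_injective hAB)
  have fg₁ : (f.range).FG := subgroupFG_of_groupFG _ (@Group.fg_range _ _ _ _ hAfg f)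
  have fg₂ : (h'.range).FG := subgroupFG_of_groupFG _ (@Group.fg_range _ _ _ _ hAfg h')
  set e₁ := MonoidHom.ofInjective hf
  set e₂ := MonoidHom.ofInjective hh'
  obtain ⟨β, hβ⟩ := hH f.range h'.range fg₁ fg₂ (e₁.symm.trans e₂)
  refine ⟨β.symm.toMonoidHom.comp h, β.symm.injective.comp hh, fun x hx => ?_⟩
  have key : β (f ⟨x, hx⟩) = h' ⟨x, hx⟩ := by
    have := hβ (e₁ ⟨x, hx⟩)
    simpa [e₁, e₂, MonoidHom.ofInjective_apply] using this
  have hcoe : h ⟨x, hAB hx⟩ = h' ⟨x, hx⟩ := rfl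
  simp only [MonoidHom.coe_comp, MulEquiv.coe_toMonoidHom, Function.comp_apply]
  rw [hcoe, ← key, MulEquiv.symm_apply_apply]

end Aux

/-- Let `G` and `H` be countable groups with `H` countably infinite and homogeneous.
Then `G` embeds into `H` if and only if every finitely generated subgroup of `G`
embeds into `H`. -/
theorem embeds_iff_fg_subgroups_embed (G : Type u) (H : Type v) [Group G] [Group H]
    [Countable G] [Countable H] [Infinite H] (hH : IsHomogeneousGroup H) :
    (∃ f : G →* H, Function.Injective f) ↔
      ∀ K : Subgroup G, K.FG → ∃ f : K →* H, Function.Injective f := by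
  constructor
  · rintro ⟨f, hf⟩ K _
    exact ⟨f.comp K.subtype, hf.comp K.subtype_injective⟩
  · intro hfg
    -- enumerate G
    obtain ⟨g, hg⟩ := exists_surjective_nat G
    -- the chain of finitely generated subgroups
    set K : ℕ → Subgroup G := fun n => Subgroup.closure (g '' Set.Iic n) with hKdef
    have hKmono : ∀ {m n : ℕ}, m ≤ n → K m ≤ K n := fun {m n} hmn =>
      Subgroup.closure_mono (Set.image_mono (Set.Iic_subset_Iic.mpr hmn))
    have hKfin : ∀ n, (g '' Set.Iic n).Finite := fun n => (Set.finite_Iic n).image g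
    have hKFG : ∀ n, Group.FG (K n) := fun n =>
      haveI : Finite (g '' Set.Iic n) := (hKfin n).to_subtype
      Group.closure_finite_fg _
    have hKfg : ∀ n, (K n).FG := fun n =>
      (Subgroup.fg_iff _).mpr ⟨g '' Set.Iic n, rfl, hKfin n⟩
    have hmem : ∀ m : ℕ, g m ∈ K m := fun m =>
      Subgroup.subset_closure (Set.mem_image_of_mem g (Set.mem_Iic.mpr le_rfl))
    -- build the compatible chain of embeddings
    have step : ∀ n (f : K n →* H), Function.Injective f →
        ∃ f' : K (n + 1) →* H, Function.Injective f' ∧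
          ∀ (x : G) (hx : x ∈ K n), f' ⟨x, hKmono (Nat.le_succ n) hx⟩ = f ⟨x, hx⟩ := by
      intro n f hf
      obtain ⟨h, hh⟩ := hfg (K (n + 1)) (hKfg (n + 1))
      exact extend_step hH (hKmono (Nat.le_succ n)) (hKFG n) f hf h hh
    obtain ⟨f0, hf0⟩ := hfg (K 0) (hKfg 0)
    let chain : (n : ℕ) → {f : K n →* H // Function.Injective f} :=
      Nat.rec ⟨f0, hf0⟩ (fun n fn => ⟨(step n fn.1 fn.2).choose, (step n fn.1 fn.2).choose_spec.1⟩)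
    have chain_succ : ∀ n (x : G) (hx : x ∈ K n),
        (chain (n + 1)).1 ⟨x, hKmono (Nat.le_succ n) hx⟩ = (chain n).1 ⟨x, hx⟩ := by
      intro n x hx
      exact (step n (chain n).1 (chain n).2).choose_spec.2 x hx
    have chain_compat : ∀ {m n : ℕ} (hmn : m ≤ n) (x : G) (hx : x ∈ K m),
        (chain n).1 ⟨x, hKmono hmn hx⟩ = (chain m).1 ⟨x, hx⟩ := by
      intro m n hmn
      induction n, hmn using Nat.le_induction with
      | base => intro x hx; rfl
      | succ n hmn ih =>
        intro x hx
        have := chain_succ n x (hKmono hmn hx)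
        rw [this, ih x hx]
    -- index function
    have hexists : ∀ x : G, ∃ n, x ∈ K n := by
      intro x
      obtain ⟨m, rfl⟩ := hg x
      exact ⟨m, hmem m⟩
    let idx : G → ℕ := fun x => (hexists x).choose
    have hidx : ∀ x : G, x ∈ K (idx x) := fun x => (hexists x).choose_spec
    let F : G → H := fun x => (chain (idx x)).1 ⟨x, hidx x⟩
    have hF : ∀ (x : G) (n : ℕ) (hn : idx x ≤ n), F x = (chain n).1 ⟨x, hKmono hn (hidx x)⟩ :=
      fun x n hn => (chain_compat hn x (hidx x)).symm
    have hFmul : ∀ x y : G, F (x * y) = F x * F y := by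
      intro x y
      set N := max (idx (x * y)) (max (idx x) (idx y)) with hN
      have h1 : idx (x * y) ≤ N := le_max_left _ _
      have h2 : idx x ≤ N := le_trans (le_max_left _ _) (le_max_right _ _)
      have h3 : idx y ≤ N := le_trans (le_max_right _ _) (le_max_right _ _)
      rw [hF (x * y) N h1, hF x N h2, hF y N h3, ← map_mul]
      rfl
    refine ⟨MonoidHom.mk' F hFmul, ?_⟩
    intro x y hxy
    simp only [MonoidHom.mk'_apply] at hxy
    set N := max (idx x) (idx y) with hN
    rw [hF x N (le_max_left _ _), hF y N (le_max_right _ _)] at hxy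
    have := (chain N).2 hxy
    exact congrArg Subtype.val this
end
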